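/- arXiv:2206.14591 — 3 statements merged into one kernel-verified Lean document; each statement's English description precedes it below -/
import Mathlib

section
/- Define φ(η)(w,u,d,y) = g1(d) − g0(d) + (w/h(u))·(y − g1(d)) − ((1−w)/(1−h(u)))·(y − g0(d)) for η = (g1, g0, h). Under the model Y = W·g1⁰(D) + (1−W)·g0⁰(D) + ε with E[ε | W, D, U] = 0, E[W | D, U] = h⁰(U), and h⁰(U), h(U) bounded in (c, 1−c) a.s., the Gateaux derivative d/dr |_{r=0} E[φ(η⁰ + r(η − η⁰))(W,U,D,Y)] equals 0 for any such triple η = (g1, g0, h). -/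
open MeasureTheory ProbabilityTheory Filter Topology

lemma integrable_of_ae_bdd {Ω : Type*} [MeasurableSpace Ω] {μ : Measure Ω} [IsFiniteMeasure μ]
    {f : Ω → ℝ} (hf : AEStronglyMeasurable f μ) {C : ℝ} (hb : ∀ᵐ ω ∂μ, |f ω| ≤ C) :
    Integrable f μ :=
  Integrable.mono' (integrable_const C) hf (by simpa [Real.norm_eq_abs] using hb)

lemma div_abs_le {a b A c' : ℝ} (h1 : |a| ≤ A) (h2 : c' ≤ b) (hc : 0 < c') :
    |a / b| ≤ A / c' := by
  have hb : 0 < b := lt_of_lt_of_le hc h2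
  rw [abs_div, abs_of_pos hb]
  exact div_le_div₀ (le_trans (abs_nonneg a) h1) h1 hc h2

lemma integral_mul_condexp_eq {Ω : Type*} [m0 : MeasurableSpace Ω] {μ : Measure Ω}
    [IsProbabilityMeasure μ] {m : MeasurableSpace Ω} (hm : m ≤ m0)
    {X Z Z' : Ω → ℝ} (hX : StronglyMeasurable[m] X) {C : ℝ}
    (hXb : ∀ᵐ ω ∂μ, ‖X ω‖ ≤ C) (hZ : Integrable Z μ) (hZ' : μ[Z|m] =ᵐ[μ] Z') :
    ∫ ω, X ω * Z ω ∂μ = ∫ ω, X ω * Z' ω ∂μ := by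
  have h1 := condExp_stronglyMeasurable_mul_of_bound hm hX hZ C hXb
  calc ∫ ω, X ω * Z ω ∂μ = ∫ ω, (μ[(fun ω => X ω * Z ω)|m]) ω ∂μ := by
        rw [integral_condExp hm]
    _ = ∫ ω, X ω * (μ[Z|m]) ω ∂μ := integral_congr_ae h1
    _ = ∫ ω, X ω * Z' ω ∂μ := integral_congr_ae (by
        filter_upwards [hZ'] with ω hω; rw [hω])

set_option maxHeartbeats 2000000 in
/-- Neyman orthogonality of the AIPW score: the Gateaux derivative of the expected
score along the path `η⁰ + r (η - η⁰)` vanishes at `r = 0`. -/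
theorem aipw_neyman_orthogonality
    {Ω : Type*} [MeasurableSpace Ω] {μ : Measure Ω} [IsProbabilityMeasure μ]
    {E F : Type*} [MeasurableSpace E] [MeasurableSpace F]
    (W : Ω → ℝ) (D : Ω → E) (U : Ω → F) (Y ε : Ω → ℝ)
    (g1₀ g0₀ g1 g0 : E → ℝ) (h₀ h : F → ℝ) (c M : ℝ) (hc : 0 < c) (hc2 : c < 1/2)
    (hWmeas : Measurable W) (hDmeas : Measurable D) (hUmeas : Measurable U)
    (hg1₀ : Measurable g1₀) (hg0₀ : Measurable g0₀) (hh₀ : Measurable h₀)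
    (hg1 : Measurable g1) (hg0 : Measurable g0) (hh : Measurable h)
    (hW01 : ∀ ω, W ω = 0 ∨ W ω = 1)
    (hmodel : ∀ ω, Y ω = W ω * g1₀ (D ω) + (1 - W ω) * g0₀ (D ω) + ε ω)
    (hεcond : μ[ε | MeasurableSpace.comap (fun ω => (W ω, D ω, U ω)) inferInstance]
      =ᵐ[μ] 0)
    (hWcond : μ[W | MeasurableSpace.comap (fun ω => (D ω, U ω)) inferInstance]
      =ᵐ[μ] fun ω => h₀ (U ω))
    (hh₀bound : ∀ᵐ ω ∂μ, c ≤ h₀ (U ω) ∧ h₀ (U ω) ≤ 1 - c)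
    (hhbound : ∀ᵐ ω ∂μ, c ≤ h (U ω) ∧ h (U ω) ≤ 1 - c)
    (hbdd : ∀ᵐ ω ∂μ, |Y ω| ≤ M ∧ |g1₀ (D ω)| ≤ M ∧ |g0₀ (D ω)| ≤ M ∧
      |g1 (D ω)| ≤ M ∧ |g0 (D ω)| ≤ M) :
    HasDerivAt (fun r : ℝ => ∫ ω,
      ((g1₀ (D ω) + r * (g1 (D ω) - g1₀ (D ω)))
        - (g0₀ (D ω) + r * (g0 (D ω) - g0₀ (D ω)))
        + (W ω / (h₀ (U ω) + r * (h (U ω) - h₀ (U ω))))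
            * (Y ω - (g1₀ (D ω) + r * (g1 (D ω) - g1₀ (D ω))))
        - ((1 - W ω) / (1 - (h₀ (U ω) + r * (h (U ω) - h₀ (U ω)))))
            * (Y ω - (g0₀ (D ω) + r * (g0 (D ω) - g0₀ (D ω))))) ∂μ)
      0 0 := by
  have hc2' : (0:ℝ) < c/2 := by positivity
  have hgood : ∀ᵐ ω ∂μ, (c ≤ h₀ (U ω) ∧ h₀ (U ω) ≤ 1 - c) ∧ (c ≤ h (U ω) ∧ h (U ω) ≤ 1 - c)
      ∧ (|Y ω| ≤ M ∧ |g1₀ (D ω)| ≤ M ∧ |g0₀ (D ω)| ≤ M ∧ |g1 (D ω)| ≤ M ∧ |g0 (D ω)| ≤ M) :=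
    hh₀bound.and (hhbound.and hbdd)
  have hWabs : ∀ ω, |W ω| ≤ 1 := by
    intro ω; rcases hW01 ω with hw | hw <;> simp [hw]
  have h1Wabs : ∀ ω, |1 - W ω| ≤ 1 := by
    intro ω; rcases hW01 ω with hw | hw <;> simp [hw]
  by_cases hY : AEStronglyMeasurable Y μ
  · -- main case
    set F' : ℝ → Ω → ℝ := fun r ω =>
      ((g1 (D ω) - g1₀ (D ω)) - (g0 (D ω) - g0₀ (D ω)))
      - (W ω * (h (U ω) - h₀ (U ω)) * (Y ω - (g1₀ (D ω) + r * (g1 (D ω) - g1₀ (D ω)))))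
          / (h₀ (U ω) + r * (h (U ω) - h₀ (U ω)))^2
      - (W ω / (h₀ (U ω) + r * (h (U ω) - h₀ (U ω)))) * (g1 (D ω) - g1₀ (D ω))
      - ((1 - W ω) * (h (U ω) - h₀ (U ω)) * (Y ω - (g0₀ (D ω) + r * (g0 (D ω) - g0₀ (D ω)))))
          / (1 - (h₀ (U ω) + r * (h (U ω) - h₀ (U ω))))^2
      + ((1 - W ω) / (1 - (h₀ (U ω) + r * (h (U ω) - h₀ (U ω))))) * (g0 (D ω) - g0₀ (D ω))
      with hF'def
    have hq_facts : ∀ ω, ((c ≤ h₀ (U ω) ∧ h₀ (U ω) ≤ 1 - c) ∧ (c ≤ h (U ω) ∧ h (U ω) ≤ 1 - c))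
        → ∀ x : ℝ, |x| < c/2 →
        c/2 ≤ h₀ (U ω) + x * (h (U ω) - h₀ (U ω)) ∧
        h₀ (U ω) + x * (h (U ω) - h₀ (U ω)) ≤ 1 - c/2 := by
      rintro ω ⟨⟨h01, h02⟩, ⟨hh1, hh2⟩⟩ x hx
      have hd : |h (U ω) - h₀ (U ω)| ≤ 1 := abs_le.mpr ⟨by linarith, by linarith⟩
      have hprod : |x * (h (U ω) - h₀ (U ω))| ≤ c/2 := by
        rw [abs_mul]
        calc |x| * |h (U ω) - h₀ (U ω)| ≤ (c/2) * 1 :=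
              mul_le_mul hx.le hd (abs_nonneg _) hc2'.le
          _ = c/2 := by ring
      have := abs_le.mp hprod
      constructor <;> linarith [this.1, this.2]
    -- differentiability a.e. on the ball
    have h_diff : ∀ᵐ ω ∂μ, ∀ x ∈ Metric.ball (0:ℝ) (c/2),
        HasDerivAt (fun r =>
          ((g1₀ (D ω) + r * (g1 (D ω) - g1₀ (D ω)))
            - (g0₀ (D ω) + r * (g0 (D ω) - g0₀ (D ω)))
            + (W ω / (h₀ (U ω) + r * (h (U ω) - h₀ (U ω))))
                * (Y ω - (g1₀ (D ω) + r * (g1 (D ω) - g1₀ (D ω))))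
            - ((1 - W ω) / (1 - (h₀ (U ω) + r * (h (U ω) - h₀ (U ω)))))
                * (Y ω - (g0₀ (D ω) + r * (g0 (D ω) - g0₀ (D ω)))))) (F' x ω) x := by
      filter_upwards [hgood] with ω hg
      intro x hx
      have hx' : |x| < c/2 := by
        simpa [Real.norm_eq_abs] using mem_ball_zero_iff.mp hx
      obtain ⟨hq1, hq2⟩ := hq_facts ω ⟨hg.1, hg.2.1⟩ x hx'
      have hqne : h₀ (U ω) + x * (h (U ω) - h₀ (U ω)) ≠ 0 := by linarith
      have h1qne : 1 - (h₀ (U ω) + x * (h (U ω) - h₀ (U ω))) ≠ 0 := by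
        intro hcon; linarith [hcon]
      have hA : HasDerivAt (fun y : ℝ => g1₀ (D ω) + y * (g1 (D ω) - g1₀ (D ω)))
          (g1 (D ω) - g1₀ (D ω)) x := (hasDerivAt_mul_const _).const_add _
      have hB : HasDerivAt (fun y : ℝ => g0₀ (D ω) + y * (g0 (D ω) - g0₀ (D ω)))
          (g0 (D ω) - g0₀ (D ω)) x := (hasDerivAt_mul_const _).const_add _
      have hq : HasDerivAt (fun y : ℝ => h₀ (U ω) + y * (h (U ω) - h₀ (U ω)))
          (h (U ω) - h₀ (U ω)) x := (hasDerivAt_mul_const _).const_add _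
      have h1q : HasDerivAt (fun y : ℝ => 1 - (h₀ (U ω) + y * (h (U ω) - h₀ (U ω))))
          (0 - (h (U ω) - h₀ (U ω))) x := (hasDerivAt_const x 1).sub hq
      have ht1 := ((hasDerivAt_const x (W ω)).div hq hqne).mul
        ((hasDerivAt_const x (Y ω)).sub hA)
      have ht2 := ((hasDerivAt_const x (1 - W ω)).div h1q h1qne).mul
        ((hasDerivAt_const x (Y ω)).sub hB)
      have htot := ((hA.sub hB).add ht1).sub ht2
      refine htot.congr_deriv ?_
      simp only [hF'def, Pi.sub_apply, Pi.div_apply, Pi.mul_apply]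
      ring
    -- bound
    have h_bound : ∀ᵐ ω ∂μ, ∀ x ∈ Metric.ball (0:ℝ) (c/2),
        ‖F' x ω‖ ≤ 4*M + 3*M/(c/2)^2 + 2*M/(c/2) + 3*M/(c/2)^2 + 2*M/(c/2) := by
      filter_upwards [hgood] with ω hg
      intro x hx
      have hx' : |x| < c/2 := by
        simpa [Real.norm_eq_abs] using mem_ball_zero_iff.mp hx
      obtain ⟨hq1, hq2⟩ := hq_facts ω ⟨hg.1, hg.2.1⟩ x hx'
      obtain ⟨hYb, h1₀b, h0₀b, h1b, h0b⟩ := hg.2.2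
      have hM : 0 ≤ M := le_trans (abs_nonneg _) hYb
      have hd : |h (U ω) - h₀ (U ω)| ≤ 1 := by
        obtain ⟨a1, a2⟩ := hg.1
        obtain ⟨b1, b2⟩ := hg.2.1
        exact abs_le.mpr ⟨by linarith, by linarith⟩
      have hd1 : |g1 (D ω) - g1₀ (D ω)| ≤ 2*M := (abs_sub _ _).trans (by linarith)
      have hd0 : |g0 (D ω) - g0₀ (D ω)| ≤ 2*M := (abs_sub _ _).trans (by linarith)
      have hxd1 : |x * (g1 (D ω) - g1₀ (D ω))| ≤ M := by
        rw [abs_mul]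
        calc |x| * |g1 (D ω) - g1₀ (D ω)| ≤ (1/2) * (2*M) :=
              mul_le_mul (by linarith) hd1 (abs_nonneg _) (by norm_num)
          _ = M := by ring
      have hxd0 : |x * (g0 (D ω) - g0₀ (D ω))| ≤ M := by
        rw [abs_mul]
        calc |x| * |g0 (D ω) - g0₀ (D ω)| ≤ (1/2) * (2*M) :=
              mul_le_mul (by linarith) hd0 (abs_nonneg _) (by norm_num)
          _ = M := by ring
      have hYA : |Y ω - (g1₀ (D ω) + x * (g1 (D ω) - g1₀ (D ω)))| ≤ 3*M := by
        have e1 := abs_sub (Y ω) (g1₀ (D ω) + x * (g1 (D ω) - g1₀ (D ω)))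
        have e2 := abs_add_le (g1₀ (D ω)) (x * (g1 (D ω) - g1₀ (D ω)))
        linarith
      have hYB : |Y ω - (g0₀ (D ω) + x * (g0 (D ω) - g0₀ (D ω)))| ≤ 3*M := by
        have e1 := abs_sub (Y ω) (g0₀ (D ω) + x * (g0 (D ω) - g0₀ (D ω)))
        have e2 := abs_add_le (g0₀ (D ω)) (x * (g0 (D ω) - g0₀ (D ω)))
        linarith
      have hqsq : (c/2)^2 ≤ (h₀ (U ω) + x * (h (U ω) - h₀ (U ω)))^2 :=
        pow_le_pow_left₀ hc2'.le hq1 2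
      have h1qsq : (c/2)^2 ≤ (1 - (h₀ (U ω) + x * (h (U ω) - h₀ (U ω))))^2 :=
        pow_le_pow_left₀ hc2'.le (by linarith) 2
      have hb1 : |(W ω * (h (U ω) - h₀ (U ω)) * (Y ω - (g1₀ (D ω) + x * (g1 (D ω) - g1₀ (D ω)))))
          / (h₀ (U ω) + x * (h (U ω) - h₀ (U ω)))^2| ≤ 3*M/(c/2)^2 := by
        apply div_abs_le _ hqsq (by positivity)
        rw [abs_mul, abs_mul]
        calc |W ω| * |h (U ω) - h₀ (U ω)| * |Y ω - (g1₀ (D ω) + x * (g1 (D ω) - g1₀ (D ω)))|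
            ≤ 1 * 1 * (3*M) := by
              apply mul_le_mul (mul_le_mul (hWabs ω) hd (abs_nonneg _) zero_le_one)
                hYA (abs_nonneg _) (by norm_num)
          _ = 3*M := by ring
      have hb3 : |((1 - W ω) * (h (U ω) - h₀ (U ω)) * (Y ω - (g0₀ (D ω) + x * (g0 (D ω) - g0₀ (D ω)))))
          / (1 - (h₀ (U ω) + x * (h (U ω) - h₀ (U ω))))^2| ≤ 3*M/(c/2)^2 := by
        apply div_abs_le _ h1qsq (by positivity)
        rw [abs_mul, abs_mul]
        calc |1 - W ω| * |h (U ω) - h₀ (U ω)| * |Y ω - (g0₀ (D ω) + x * (g0 (D ω) - g0₀ (D ω)))|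
            ≤ 1 * 1 * (3*M) := by
              apply mul_le_mul (mul_le_mul (h1Wabs ω) hd (abs_nonneg _) zero_le_one)
                hYB (abs_nonneg _) (by norm_num)
          _ = 3*M := by ring
      have hb2 : |(W ω / (h₀ (U ω) + x * (h (U ω) - h₀ (U ω)))) * (g1 (D ω) - g1₀ (D ω))|
          ≤ 2*M/(c/2) := by
        have e : (W ω / (h₀ (U ω) + x * (h (U ω) - h₀ (U ω)))) * (g1 (D ω) - g1₀ (D ω))
            = (W ω * (g1 (D ω) - g1₀ (D ω))) / (h₀ (U ω) + x * (h (U ω) - h₀ (U ω))) := by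
          ring
        rw [e]
        apply div_abs_le _ hq1 hc2'
        rw [abs_mul]
        calc |W ω| * |g1 (D ω) - g1₀ (D ω)| ≤ 1 * (2*M) :=
              mul_le_mul (hWabs ω) hd1 (abs_nonneg _) zero_le_one
          _ = 2*M := by ring
      have hb4 : |((1 - W ω) / (1 - (h₀ (U ω) + x * (h (U ω) - h₀ (U ω))))) * (g0 (D ω) - g0₀ (D ω))|
          ≤ 2*M/(c/2) := by
        have e : ((1 - W ω) / (1 - (h₀ (U ω) + x * (h (U ω) - h₀ (U ω))))) * (g0 (D ω) - g0₀ (D ω))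
            = ((1 - W ω) * (g0 (D ω) - g0₀ (D ω))) / (1 - (h₀ (U ω) + x * (h (U ω) - h₀ (U ω)))) := by
          ring
        rw [e]
        apply div_abs_le _ (by linarith : c/2 ≤ 1 - (h₀ (U ω) + x * (h (U ω) - h₀ (U ω)))) hc2'
        rw [abs_mul]
        calc |1 - W ω| * |g0 (D ω) - g0₀ (D ω)| ≤ 1 * (2*M) :=
              mul_le_mul (h1Wabs ω) hd0 (abs_nonneg _) zero_le_one
          _ = 2*M := by ring
      have hb0 : |(g1 (D ω) - g1₀ (D ω)) - (g0 (D ω) - g0₀ (D ω))| ≤ 4*M := by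
        have := abs_sub (g1 (D ω) - g1₀ (D ω)) (g0 (D ω) - g0₀ (D ω))
        linarith
      rw [Real.norm_eq_abs, hF'def]
      set t0 := (g1 (D ω) - g1₀ (D ω)) - (g0 (D ω) - g0₀ (D ω))
      set t1 := (W ω * (h (U ω) - h₀ (U ω)) * (Y ω - (g1₀ (D ω) + x * (g1 (D ω) - g1₀ (D ω)))))
          / (h₀ (U ω) + x * (h (U ω) - h₀ (U ω)))^2
      set t2 := (W ω / (h₀ (U ω) + x * (h (U ω) - h₀ (U ω)))) * (g1 (D ω) - g1₀ (D ω))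
      set t3 := ((1 - W ω) * (h (U ω) - h₀ (U ω)) * (Y ω - (g0₀ (D ω) + x * (g0 (D ω) - g0₀ (D ω)))))
          / (1 - (h₀ (U ω) + x * (h (U ω) - h₀ (U ω))))^2
      set t4 := ((1 - W ω) / (1 - (h₀ (U ω) + x * (h (U ω) - h₀ (U ω))))) * (g0 (D ω) - g0₀ (D ω))
      have e1 := abs_add_le (t0 - t1 - t2 - t3) t4
      have e2 := abs_sub (t0 - t1 - t2) t3
      have e3 := abs_sub (t0 - t1) t2
      have e4 := abs_sub t0 t1
      linarith
    -- measurability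
    have hdiv : ∀ {u v : Ω → ℝ}, AEStronglyMeasurable u μ → Measurable v →
        AEStronglyMeasurable (fun ω => u ω / v ω) μ := fun hu hv =>
      (hu.mul hv.inv.aestronglyMeasurable).congr
        (Filter.Eventually.of_forall fun ω => (div_eq_mul_inv _ _).symm)
    have hFmeas : ∀ x : ℝ, AEStronglyMeasurable (fun ω =>
        ((g1₀ (D ω) + x * (g1 (D ω) - g1₀ (D ω)))
          - (g0₀ (D ω) + x * (g0 (D ω) - g0₀ (D ω)))
          + (W ω / (h₀ (U ω) + x * (h (U ω) - h₀ (U ω))))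
              * (Y ω - (g1₀ (D ω) + x * (g1 (D ω) - g1₀ (D ω))))
          - ((1 - W ω) / (1 - (h₀ (U ω) + x * (h (U ω) - h₀ (U ω)))))
              * (Y ω - (g0₀ (D ω) + x * (g0 (D ω) - g0₀ (D ω)))))) μ := by
      intro x
      have m1 : Measurable (fun ω => (g1₀ (D ω) + x * (g1 (D ω) - g1₀ (D ω)))
          - (g0₀ (D ω) + x * (g0 (D ω) - g0₀ (D ω)))) := by fun_prop
      have m2 : Measurable (fun ω => W ω / (h₀ (U ω) + x * (h (U ω) - h₀ (U ω)))) := by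
        fun_prop
      have m3 : Measurable (fun ω => g1₀ (D ω) + x * (g1 (D ω) - g1₀ (D ω))) := by fun_prop
      have m4 : Measurable (fun ω => (1 - W ω) / (1 - (h₀ (U ω) + x * (h (U ω) - h₀ (U ω))))) := by
        fun_prop
      have m5 : Measurable (fun ω => g0₀ (D ω) + x * (g0 (D ω) - g0₀ (D ω))) := by fun_prop
      exact ((m1.aestronglyMeasurable.add
        (m2.aestronglyMeasurable.mul (hY.sub m3.aestronglyMeasurable))).sub
        (m4.aestronglyMeasurable.mul (hY.sub m5.aestronglyMeasurable)))
    have hF'meas : AEStronglyMeasurable (F' 0) μ := by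
      rw [hF'def]
      have m0 : Measurable (fun ω => (g1 (D ω) - g1₀ (D ω)) - (g0 (D ω) - g0₀ (D ω))) := by
        fun_prop
      have m1 : Measurable (fun ω => W ω * (h (U ω) - h₀ (U ω))) := by fun_prop
      have m1' : Measurable (fun ω => g1₀ (D ω) + (0:ℝ) * (g1 (D ω) - g1₀ (D ω))) := by fun_prop
      have m1'' : Measurable (fun ω => (h₀ (U ω) + (0:ℝ) * (h (U ω) - h₀ (U ω)))^2) := by fun_prop
      have m2 : Measurable (fun ω =>
          (W ω / (h₀ (U ω) + (0:ℝ) * (h (U ω) - h₀ (U ω)))) * (g1 (D ω) - g1₀ (D ω))) := by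
        fun_prop
      have m3 : Measurable (fun ω => (1 - W ω) * (h (U ω) - h₀ (U ω))) := by fun_prop
      have m3' : Measurable (fun ω => g0₀ (D ω) + (0:ℝ) * (g0 (D ω) - g0₀ (D ω))) := by fun_prop
      have m3'' : Measurable
          (fun ω => (1 - (h₀ (U ω) + (0:ℝ) * (h (U ω) - h₀ (U ω))))^2) := by fun_prop
      have m4 : Measurable (fun ω =>
          ((1 - W ω) / (1 - (h₀ (U ω) + (0:ℝ) * (h (U ω) - h₀ (U ω)))))
            * (g0 (D ω) - g0₀ (D ω))) := by fun_prop
      exact ((((m0.aestronglyMeasurable.sub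
        (hdiv (m1.aestronglyMeasurable.mul (hY.sub m1'.aestronglyMeasurable)) m1'')).sub
        m2.aestronglyMeasurable).sub
        (hdiv (m3.aestronglyMeasurable.mul (hY.sub m3'.aestronglyMeasurable)) m3'')).add
        m4.aestronglyMeasurable)
    -- integrability of F 0
    have hFint : Integrable (fun ω =>
        ((g1₀ (D ω) + (0:ℝ) * (g1 (D ω) - g1₀ (D ω)))
          - (g0₀ (D ω) + (0:ℝ) * (g0 (D ω) - g0₀ (D ω)))
          + (W ω / (h₀ (U ω) + (0:ℝ) * (h (U ω) - h₀ (U ω))))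
              * (Y ω - (g1₀ (D ω) + (0:ℝ) * (g1 (D ω) - g1₀ (D ω))))
          - ((1 - W ω) / (1 - (h₀ (U ω) + (0:ℝ) * (h (U ω) - h₀ (U ω)))))
              * (Y ω - (g0₀ (D ω) + (0:ℝ) * (g0 (D ω) - g0₀ (D ω)))))) μ := by
      apply integrable_of_ae_bdd (hFmeas 0) (C := 2*M + 2*M/c + 2*M/c)
      filter_upwards [hgood] with ω hg
      obtain ⟨hYb, h1₀b, h0₀b, h1b, h0b⟩ := hg.2.2
      have hM : 0 ≤ M := le_trans (abs_nonneg _) hYb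
      simp only [zero_mul, add_zero]
      have hu1 : |(W ω / h₀ (U ω)) * (Y ω - g1₀ (D ω))| ≤ 2*M/c := by
        have e : (W ω / h₀ (U ω)) * (Y ω - g1₀ (D ω))
            = (W ω * (Y ω - g1₀ (D ω))) / h₀ (U ω) := by ring
        rw [e]
        apply div_abs_le _ hg.1.1 hc
        rw [abs_mul]
        calc |W ω| * |Y ω - g1₀ (D ω)| ≤ 1 * (2*M) := by
              apply mul_le_mul (hWabs ω) ((abs_sub _ _).trans (by linarith))
                (abs_nonneg _) zero_le_one
          _ = 2*M := by ring
      have hu2 : |((1 - W ω) / (1 - h₀ (U ω))) * (Y ω - g0₀ (D ω))| ≤ 2*M/c := by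
        have e : ((1 - W ω) / (1 - h₀ (U ω))) * (Y ω - g0₀ (D ω))
            = ((1 - W ω) * (Y ω - g0₀ (D ω))) / (1 - h₀ (U ω)) := by ring
        rw [e]
        apply div_abs_le _ (by linarith [hg.1.2] : c ≤ 1 - h₀ (U ω)) hc
        rw [abs_mul]
        calc |1 - W ω| * |Y ω - g0₀ (D ω)| ≤ 1 * (2*M) := by
              apply mul_le_mul (h1Wabs ω) ((abs_sub _ _).trans (by linarith))
                (abs_nonneg _) zero_le_one
          _ = 2*M := by ring
      have hu0 : |g1₀ (D ω) - g0₀ (D ω)| ≤ 2*M := (abs_sub _ _).trans (by linarith)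
      have e1 := abs_add_le (g1₀ (D ω) - g0₀ (D ω)) ((W ω / h₀ (U ω)) * (Y ω - g1₀ (D ω)))
      have e2 := abs_sub (g1₀ (D ω) - g0₀ (D ω) + (W ω / h₀ (U ω)) * (Y ω - g1₀ (D ω)))
        (((1 - W ω) / (1 - h₀ (U ω))) * (Y ω - g0₀ (D ω)))
      linarith
    obtain ⟨-, hder⟩ := hasDerivAt_integral_of_dominated_loc_of_deriv_le
      (μ := μ) (x₀ := (0:ℝ))
      (F := fun r ω =>
        ((g1₀ (D ω) + r * (g1 (D ω) - g1₀ (D ω)))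
          - (g0₀ (D ω) + r * (g0 (D ω) - g0₀ (D ω)))
          + (W ω / (h₀ (U ω) + r * (h (U ω) - h₀ (U ω))))
              * (Y ω - (g1₀ (D ω) + r * (g1 (D ω) - g1₀ (D ω))))
          - ((1 - W ω) / (1 - (h₀ (U ω) + r * (h (U ω) - h₀ (U ω)))))
              * (Y ω - (g0₀ (D ω) + r * (g0 (D ω) - g0₀ (D ω))))))
      (F' := F')
      (bound := fun _ => 4*M + 3*M/(c/2)^2 + 2*M/(c/2) + 3*M/(c/2)^2 + 2*M/(c/2))
      (Metric.ball_mem_nhds 0 hc2') (Filter.Eventually.of_forall hFmeas) hFint hF'meas h_bound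
      (integrable_const _) h_diff
    -- conditional expectation sub-sigma-algebras
    have hm1 := (hWmeas.prodMk (hDmeas.prodMk hUmeas)).comap_le
    have hm2 := (hDmeas.prodMk hUmeas).comap_le
    -- ε facts
    have hεeq : ∀ ω, ε ω = Y ω - (W ω * g1₀ (D ω) + (1 - W ω) * g0₀ (D ω)) := fun ω => by
      rw [hmodel ω]; ring
    have hεaesm : AEStronglyMeasurable ε μ := by
      have he : ε = fun ω => Y ω - (W ω * g1₀ (D ω) + (1 - W ω) * g0₀ (D ω)) := funext hεeq
      rw [he]
      exact hY.sub (by fun_prop : Measurable fun ω =>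
        W ω * g1₀ (D ω) + (1 - W ω) * g0₀ (D ω)).aestronglyMeasurable
    have hεbdd : ∀ᵐ ω ∂μ, |ε ω| ≤ 2*M := by
      filter_upwards [hbdd] with ω hb
      rcases hW01 ω with hw | hw
      · have he : ε ω = Y ω - g0₀ (D ω) := by rw [hεeq ω, hw]; ring
        rw [he]; exact (abs_sub _ _).trans (by linarith [hb.1, hb.2.2.1])
      · have he : ε ω = Y ω - g1₀ (D ω) := by rw [hεeq ω, hw]; ring
        rw [he]; exact (abs_sub _ _).trans (by linarith [hb.1, hb.2.1])
    have hεint : Integrable ε μ := integrable_of_ae_bdd hεaesm hεbdd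
    have hWint : Integrable W μ :=
      integrable_of_ae_bdd hWmeas.aestronglyMeasurable (Filter.Eventually.of_forall hWabs)
    -- decomposition functions
    set Xe : Ω → ℝ := fun ω => -(W ω / (h₀ (U ω))^2 * (h (U ω) - h₀ (U ω)))
      - ((1 - W ω) / (1 - h₀ (U ω))^2 * (h (U ω) - h₀ (U ω))) with hXedef
    set XW : Ω → ℝ := fun ω => -((g1 (D ω) - g1₀ (D ω)) / h₀ (U ω)
      + (g0 (D ω) - g0₀ (D ω)) / (1 - h₀ (U ω))) with hXWdef
    set R : Ω → ℝ := fun ω => (g1 (D ω) - g1₀ (D ω)) - (g0 (D ω) - g0₀ (D ω))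
      + (g0 (D ω) - g0₀ (D ω)) / (1 - h₀ (U ω)) with hRdef
    have hXesm : StronglyMeasurable[MeasurableSpace.comap
        (fun ω => (W ω, D ω, U ω)) inferInstance] Xe := by
      have hco : Measurable[MeasurableSpace.comap (fun ω => (W ω, D ω, U ω)) inferInstance]
          (fun ω => (W ω, D ω, U ω)) := Measurable.of_comap_le le_rfl
      have hxi : Measurable (fun p : ℝ × E × F =>
          -(p.1 / (h₀ p.2.2)^2 * (h p.2.2 - h₀ p.2.2))
          - ((1 - p.1) / (1 - h₀ p.2.2)^2 * (h p.2.2 - h₀ p.2.2))) := by fun_prop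
      exact (hxi.comp hco).stronglyMeasurable
    have hXWsm : StronglyMeasurable[MeasurableSpace.comap
        (fun ω => (D ω, U ω)) inferInstance] XW := by
      have hco : Measurable[MeasurableSpace.comap (fun ω => (D ω, U ω)) inferInstance]
          (fun ω => (D ω, U ω)) := Measurable.of_comap_le le_rfl
      have hxi : Measurable (fun p : E × F =>
          -((g1 p.1 - g1₀ p.1) / h₀ p.2 + (g0 p.1 - g0₀ p.1) / (1 - h₀ p.2))) := by fun_prop
      exact (hxi.comp hco).stronglyMeasurable
    have hXebdd : ∀ᵐ ω ∂μ, ‖Xe ω‖ ≤ 1/c^2 + 1/c^2 := by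
      filter_upwards [hgood] with ω hg
      have hd : |h (U ω) - h₀ (U ω)| ≤ 1 := by
        obtain ⟨a1, a2⟩ := hg.1
        obtain ⟨b1, b2⟩ := hg.2.1
        exact abs_le.mpr ⟨by linarith, by linarith⟩
      have ha : |W ω / (h₀ (U ω))^2 * (h (U ω) - h₀ (U ω))| ≤ 1/c^2 := by
        have e : W ω / (h₀ (U ω))^2 * (h (U ω) - h₀ (U ω))
            = (W ω * (h (U ω) - h₀ (U ω))) / (h₀ (U ω))^2 := by ring
        rw [e]
        apply div_abs_le _ (pow_le_pow_left₀ hc.le hg.1.1 2) (by positivity)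
        rw [abs_mul]
        calc |W ω| * |h (U ω) - h₀ (U ω)| ≤ 1 * 1 :=
              mul_le_mul (hWabs ω) hd (abs_nonneg _) zero_le_one
          _ = 1 := by ring
      have hb : |(1 - W ω) / (1 - h₀ (U ω))^2 * (h (U ω) - h₀ (U ω))| ≤ 1/c^2 := by
        have e : (1 - W ω) / (1 - h₀ (U ω))^2 * (h (U ω) - h₀ (U ω))
            = ((1 - W ω) * (h (U ω) - h₀ (U ω))) / (1 - h₀ (U ω))^2 := by ring
        rw [e]
        apply div_abs_le _ (pow_le_pow_left₀ hc.le (by linarith [hg.1.2]) 2) (by positivity)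
        rw [abs_mul]
        calc |1 - W ω| * |h (U ω) - h₀ (U ω)| ≤ 1 * 1 :=
              mul_le_mul (h1Wabs ω) hd (abs_nonneg _) zero_le_one
          _ = 1 := by ring
      rw [Real.norm_eq_abs, hXedef]
      have e0 := abs_sub (-(W ω / (h₀ (U ω))^2 * (h (U ω) - h₀ (U ω))))
        ((1 - W ω) / (1 - h₀ (U ω))^2 * (h (U ω) - h₀ (U ω)))
      rw [abs_neg] at e0
      linarith
    have hXWbdd : ∀ᵐ ω ∂μ, ‖XW ω‖ ≤ 2*M/c + 2*M/c := by
      filter_upwards [hgood] with ω hg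
      obtain ⟨hYb, h1₀b, h0₀b, h1b, h0b⟩ := hg.2.2
      have ha : |(g1 (D ω) - g1₀ (D ω)) / h₀ (U ω)| ≤ 2*M/c :=
        div_abs_le ((abs_sub _ _).trans (by linarith)) hg.1.1 hc
      have hb : |(g0 (D ω) - g0₀ (D ω)) / (1 - h₀ (U ω))| ≤ 2*M/c :=
        div_abs_le ((abs_sub _ _).trans (by linarith)) (by linarith [hg.1.2]) hc
      rw [Real.norm_eq_abs, hXWdef]
      have e0 := abs_add_le ((g1 (D ω) - g1₀ (D ω)) / h₀ (U ω))
        ((g0 (D ω) - g0₀ (D ω)) / (1 - h₀ (U ω)))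
      rw [abs_neg]
      linarith
    have hRbdd : ∀ᵐ ω ∂μ, |R ω| ≤ 2*M + 2*M + 2*M/c := by
      filter_upwards [hgood] with ω hg
      obtain ⟨hYb, h1₀b, h0₀b, h1b, h0b⟩ := hg.2.2
      have ha : |(g0 (D ω) - g0₀ (D ω)) / (1 - h₀ (U ω))| ≤ 2*M/c :=
        div_abs_le ((abs_sub _ _).trans (by linarith)) (by linarith [hg.1.2]) hc
      have hu0 : |g1 (D ω) - g1₀ (D ω)| ≤ 2*M := (abs_sub _ _).trans (by linarith)
      have hu1 : |g0 (D ω) - g0₀ (D ω)| ≤ 2*M := (abs_sub _ _).trans (by linarith)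
      rw [hRdef]
      have e1 := abs_add_le ((g1 (D ω) - g1₀ (D ω)) - (g0 (D ω) - g0₀ (D ω)))
        ((g0 (D ω) - g0₀ (D ω)) / (1 - h₀ (U ω)))
      have e2 := abs_sub (g1 (D ω) - g1₀ (D ω)) (g0 (D ω) - g0₀ (D ω))
      linarith
    have iXe : Integrable (fun ω => Xe ω * ε ω) μ := by
      apply integrable_of_ae_bdd
        (((hXesm.mono hm1).aestronglyMeasurable).mul hεaesm)
        (C := (1/c^2 + 1/c^2) * (2*M))
      filter_upwards [hXebdd, hεbdd] with ω h1 h2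
      simp only [Pi.mul_apply]
      rw [abs_mul]
      exact mul_le_mul (by simpa [Real.norm_eq_abs] using h1) h2 (abs_nonneg _) (by positivity)
    have iXW : Integrable (fun ω => XW ω * W ω) μ := by
      apply integrable_of_ae_bdd
        (((hXWsm.mono hm2).aestronglyMeasurable).mul hWmeas.aestronglyMeasurable)
        (C := (2*M/c + 2*M/c) * 1)
      filter_upwards [hXWbdd, hgood] with ω h1 hg
      have hM : 0 ≤ M := le_trans (abs_nonneg _) hg.2.2.1
      simp only [Pi.mul_apply]
      rw [abs_mul]
      exact mul_le_mul (by simpa [Real.norm_eq_abs] using h1) (hWabs ω) (abs_nonneg _)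
        (by positivity)
    have iR : Integrable R μ := by
      apply integrable_of_ae_bdd ((by fun_prop : Measurable R).aestronglyMeasurable) hRbdd
    have hdecomp : ∀ᵐ ω ∂μ, F' 0 ω = Xe ω * ε ω + XW ω * W ω + R ω := by
      filter_upwards [hgood] with ω hg
      have h1 : h₀ (U ω) ≠ 0 := by have := hg.1.1; intro hcon; rw [hcon] at this; linarith
      have h2 : (1:ℝ) - h₀ (U ω) ≠ 0 := by
        have h' := hg.1.2
        intro hcon
        have h'' : h₀ (U ω) = 1 := by linarith
        linarith
      simp only [hF'def, hXedef, hXWdef, hRdef]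
      rw [hmodel ω]
      rcases hW01 ω with hw | hw <;> rw [hw] <;> simp only [zero_mul, add_zero] <;> field_simp <;> ring
    have e1 : ∫ ω, Xe ω * ε ω ∂μ = 0 := by
      rw [integral_mul_condexp_eq hm1 hXesm hXebdd hεint hεcond]
      simp
    have e2 : ∫ ω, XW ω * W ω ∂μ = ∫ ω, XW ω * h₀ (U ω) ∂μ :=
      integral_mul_condexp_eq hm2 hXWsm hXWbdd hWint hWcond
    have e3 : ∫ ω, XW ω * h₀ (U ω) ∂μ = ∫ ω, -R ω ∂μ := by
      apply integral_congr_ae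
      filter_upwards [hgood] with ω hg
      have h1 : h₀ (U ω) ≠ 0 := by have := hg.1.1; intro hcon; rw [hcon] at this; linarith
      have h2 : (1:ℝ) - h₀ (U ω) ≠ 0 := by
        have h' := hg.1.2
        intro hcon
        have h'' : h₀ (U ω) = 1 := by linarith
        linarith
      simp only [hXWdef, hRdef]
      field_simp
      ring
    have h0 : ∫ ω, F' 0 ω ∂μ = 0 := by
      have iXY : Integrable (fun ω => Xe ω * ε ω + XW ω * W ω) μ := iXe.add iXW
      rw [integral_congr_ae hdecomp, integral_add iXY iR, integral_add iXe iXW,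
        e1, e2, e3, integral_neg]
      ring
    rw [h0] at hder
    exact hder
  · -- Y not a.e. strongly measurable
    have hint0 : ∀ᶠ r in 𝓝 (0:ℝ), (∫ ω,
        ((g1₀ (D ω) + r * (g1 (D ω) - g1₀ (D ω)))
          - (g0₀ (D ω) + r * (g0 (D ω) - g0₀ (D ω)))
          + (W ω / (h₀ (U ω) + r * (h (U ω) - h₀ (U ω))))
              * (Y ω - (g1₀ (D ω) + r * (g1 (D ω) - g1₀ (D ω))))
          - ((1 - W ω) / (1 - (h₀ (U ω) + r * (h (U ω) - h₀ (U ω)))))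
              * (Y ω - (g0₀ (D ω) + r * (g0 (D ω) - g0₀ (D ω))))) ∂μ) = 0 := by
      filter_upwards [Metric.ball_mem_nhds (0:ℝ) hc2'] with r hr
      have hr' : |r| < c/2 := by
        simpa [Real.norm_eq_abs] using mem_ball_zero_iff.mp hr
      apply integral_undef
      intro hInt
      apply hY
      set coeff : Ω → ℝ := fun ω => W ω / (h₀ (U ω) + r * (h (U ω) - h₀ (U ω)))
        - (1 - W ω) / (1 - (h₀ (U ω) + r * (h (U ω) - h₀ (U ω)))) with hcoeffdef
      set M1 : Ω → ℝ := fun ω => (g1₀ (D ω) + r * (g1 (D ω) - g1₀ (D ω)))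
          - (g0₀ (D ω) + r * (g0 (D ω) - g0₀ (D ω)))
          - (W ω / (h₀ (U ω) + r * (h (U ω) - h₀ (U ω))))
              * (g1₀ (D ω) + r * (g1 (D ω) - g1₀ (D ω)))
          + ((1 - W ω) / (1 - (h₀ (U ω) + r * (h (U ω) - h₀ (U ω)))))
              * (g0₀ (D ω) + r * (g0 (D ω) - g0₀ (D ω))) with hM1def
      have hcoeffmeas : Measurable coeff := by
        rw [hcoeffdef]; fun_prop
      have hM1meas : Measurable M1 := by
        rw [hM1def]; fun_prop
      have key : Y =ᵐ[μ] fun ω =>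
          (((g1₀ (D ω) + r * (g1 (D ω) - g1₀ (D ω)))
            - (g0₀ (D ω) + r * (g0 (D ω) - g0₀ (D ω)))
            + (W ω / (h₀ (U ω) + r * (h (U ω) - h₀ (U ω))))
                * (Y ω - (g1₀ (D ω) + r * (g1 (D ω) - g1₀ (D ω))))
            - ((1 - W ω) / (1 - (h₀ (U ω) + r * (h (U ω) - h₀ (U ω)))))
                * (Y ω - (g0₀ (D ω) + r * (g0 (D ω) - g0₀ (D ω))))) - M1 ω) / coeff ω := by
        filter_upwards [hgood] with ω hg
        have hd : |h (U ω) - h₀ (U ω)| ≤ 1 := by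
          obtain ⟨a1, a2⟩ := hg.1
          obtain ⟨b1, b2⟩ := hg.2.1
          exact abs_le.mpr ⟨by linarith, by linarith⟩
        have hprod : |r * (h (U ω) - h₀ (U ω))| ≤ c/2 := by
          rw [abs_mul]
          calc |r| * |h (U ω) - h₀ (U ω)| ≤ (c/2) * 1 :=
                mul_le_mul hr'.le hd (abs_nonneg _) hc2'.le
            _ = c/2 := by ring
        have hpr := abs_le.mp hprod
        have hq1 : c/2 ≤ h₀ (U ω) + r * (h (U ω) - h₀ (U ω)) := by
          have := hg.1.1; linarith
        have hq2 : h₀ (U ω) + r * (h (U ω) - h₀ (U ω)) ≤ 1 - c/2 := by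
          have := hg.1.2; linarith
        have hcoeff_ne : coeff ω ≠ 0 := by
          rcases hW01 ω with hw | hw
          · rw [hcoeffdef]
            simp only [hw]
            intro hcon
            have h1q : (0:ℝ) < 1 - (h₀ (U ω) + r * (h (U ω) - h₀ (U ω))) := by linarith
            rw [zero_div, zero_sub, neg_eq_zero, sub_zero, div_eq_zero_iff] at hcon
            rcases hcon with h' | h' <;> [exact one_ne_zero h'; linarith]
          · rw [hcoeffdef]
            simp only [hw]
            intro hcon
            rw [sub_self, zero_div, sub_zero, div_eq_zero_iff] at hcon
            rcases hcon with h' | h' <;> [exact one_ne_zero h'; linarith]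
        have hid : ((g1₀ (D ω) + r * (g1 (D ω) - g1₀ (D ω)))
            - (g0₀ (D ω) + r * (g0 (D ω) - g0₀ (D ω)))
            + (W ω / (h₀ (U ω) + r * (h (U ω) - h₀ (U ω))))
                * (Y ω - (g1₀ (D ω) + r * (g1 (D ω) - g1₀ (D ω))))
            - ((1 - W ω) / (1 - (h₀ (U ω) + r * (h (U ω) - h₀ (U ω)))))
                * (Y ω - (g0₀ (D ω) + r * (g0 (D ω) - g0₀ (D ω)))))
            = M1 ω + coeff ω * Y ω := by
          rw [hM1def, hcoeffdef]; ring
        rw [hid]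
        have : M1 ω + coeff ω * Y ω - M1 ω = coeff ω * Y ω := by ring
        rw [this]
        exact (mul_div_cancel_left₀ (Y ω) hcoeff_ne).symm
      have hA := (hInt.1.sub hM1meas.aestronglyMeasurable).mul
        hcoeffmeas.inv.aestronglyMeasurable
      exact ((hA.congr (Filter.Eventually.of_forall fun ω =>
        (div_eq_mul_inv _ _).symm)).congr key.symm)
    exact (hasDerivAt_const (0:ℝ) (0:ℝ)).congr_of_eventuallyEq hint0
end

section
/- With φ as in the Neyman orthogonality setup, for every r ∈ (0,1) the second derivative satisfies | d²/dr² E[φ(η⁰ + r(η − η⁰))(W,U,D,Y)] | ≤ C·( ‖g1(D)−g1⁰(D)‖_{L²} + ‖g0(D)−g0⁰(D)‖_{L²} + ‖h(U)−h⁰(U)‖_{L²} )·‖h(U)−h⁰(U)‖_{L²}, where C is a constant depending only on the a.s. bounds c on h, h⁰ (away from 0 and 1) and a uniform a.s. bound on |Y|, |g0⁰(D)|, |g1⁰(D)|, |g0(D)|, |g1(D)|. -/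
open MeasureTheory
open scoped ENNReal


noncomputable def phiA (w y a1 b1 a0 b0 p q s : ℝ) : ℝ :=
  (a1 + s * b1) - (a0 + s * b0)
    + (w / (p + s * q)) * (y - (a1 + s * b1))
    - ((1 - w) / (1 - (p + s * q))) * (y - (a0 + s * b0))

noncomputable def phiB (w y a1 b1 a0 b0 p q s : ℝ) : ℝ :=
  (b1 - b0)
    + ((-(w * q)) / (p + s * q) ^ 2 * (y - (a1 + s * b1)) + (w / (p + s * q)) * (-b1))
    - (((1 - w) * q) / (1 - (p + s * q)) ^ 2 * (y - (a0 + s * b0))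
        + ((1 - w) / (1 - (p + s * q))) * (-b0))

noncomputable def phiC (w y a1 b1 a0 b0 p q s : ℝ) : ℝ :=
  2 * w * q * (b1 * (p + s * q) + q * (y - (a1 + s * b1))) / (p + s * q) ^ 3
    - 2 * (1 - w) * q * (q * (y - (a0 + s * b0)) - b0 * (1 - (p + s * q))) / (1 - (p + s * q)) ^ 3

theorem hasDerivAt_phiA (w y a1 b1 a0 b0 p q s : ℝ)
    (h1 : p + s * q ≠ 0) (h2 : 1 - (p + s * q) ≠ 0) :
    HasDerivAt (fun t => phiA w y a1 b1 a0 b0 p q t) (phiB w y a1 b1 a0 b0 p q s) s := by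
  have hden : HasDerivAt (fun t : ℝ => p + t * q) q s := by
    simpa using ((hasDerivAt_id s).mul_const q).const_add p
  have hden2 : HasDerivAt (fun t : ℝ => 1 - (p + t * q)) (-q) s := hden.const_sub 1
  have hl1 : HasDerivAt (fun t : ℝ => a1 + t * b1) b1 s := by
    simpa using ((hasDerivAt_id s).mul_const b1).const_add a1
  have hl0 : HasDerivAt (fun t : ℝ => a0 + t * b0) b0 s := by
    simpa using ((hasDerivAt_id s).mul_const b0).const_add a0
  have hz1 : HasDerivAt (fun t : ℝ => y - (a1 + t * b1)) (-b1) s := hl1.const_sub y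
  have hz0 : HasDerivAt (fun t : ℝ => y - (a0 + t * b0)) (-b0) s := hl0.const_sub y
  have hq1 := (hasDerivAt_const s w).div hden h1
  have hq2 := (hasDerivAt_const s (1 - w)).div hden2 h2
  have H := ((hl1.sub hl0).add (hq1.mul hz1)).sub (hq2.mul hz0)
  convert H using 1
  · rfl
  · rfl
  · rfl
  unfold phiB
  simp only [Pi.div_apply]
  field_simp
  try ring

theorem hasDerivAt_phiB (w y a1 b1 a0 b0 p q s : ℝ)
    (h1 : p + s * q ≠ 0) (h2 : 1 - (p + s * q) ≠ 0) :
    HasDerivAt (fun t => phiB w y a1 b1 a0 b0 p q t) (phiC w y a1 b1 a0 b0 p q s) s := by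
  have hden : HasDerivAt (fun t : ℝ => p + t * q) q s := by
    simpa using ((hasDerivAt_id s).mul_const q).const_add p
  have hden2 : HasDerivAt (fun t : ℝ => 1 - (p + t * q)) (-q) s := hden.const_sub 1
  have hl1 : HasDerivAt (fun t : ℝ => a1 + t * b1) b1 s := by
    simpa using ((hasDerivAt_id s).mul_const b1).const_add a1
  have hl0 : HasDerivAt (fun t : ℝ => a0 + t * b0) b0 s := by
    simpa using ((hasDerivAt_id s).mul_const b0).const_add a0
  have hz1 : HasDerivAt (fun t : ℝ => y - (a1 + t * b1)) (-b1) s := hl1.const_sub y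
  have hz0 : HasDerivAt (fun t : ℝ => y - (a0 + t * b0)) (-b0) s := hl0.const_sub y
  have hq1 := (hasDerivAt_const s w).div hden h1
  have hq2 := (hasDerivAt_const s (1 - w)).div hden2 h2
  have hB1 := ((hasDerivAt_const s (-(w * q))).div (hden.pow 2) (pow_ne_zero 2 h1)).mul hz1
  have hB2 := hq1.mul_const (-b1)
  have hC1 := ((hasDerivAt_const s ((1 - w) * q)).div (hden2.pow 2) (pow_ne_zero 2 h2)).mul hz0
  have hC2 := hq2.mul_const (-b0)
  have H := ((hasDerivAt_const s (b1 - b0)).add (hB1.add hB2)).sub (hC1.add hC2)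
  convert H using 1
  · rfl
  · rfl
  · rfl
  unfold phiC
  simp only [Pi.div_apply, Pi.pow_apply, Nat.cast_ofNat, Nat.add_one_sub_one, pow_one]
  field_simp
  try ring


lemma frac_bound' {x d A c : ℝ} (hx : |x| ≤ A) (hc : 0 < c) (hd : c ≤ d) : |x / d| ≤ A / c := by
  rw [abs_div, abs_of_pos (lt_of_lt_of_le hc hd)]
  exact div_le_div₀ ((abs_nonneg x).trans hx) hx hc hd

lemma mul_abs_le' {x y A B : ℝ} (hx : |x| ≤ A) (hy : |y| ≤ B) : |x * y| ≤ A * B := by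
  rw [abs_mul]
  exact mul_le_mul hx hy (abs_nonneg _) ((abs_nonneg x).trans hx)

lemma abs5 (A B1 B2 C1 C2 : ℝ) :
    |A + (B1 + B2) - (C1 + C2)| ≤ |A| + (|B1| + |B2|) + (|C1| + |C2|) := by
  calc |A + (B1 + B2) - (C1 + C2)| ≤ |A + (B1 + B2)| + |C1 + C2| := abs_sub _ _
    _ ≤ (|A| + (|B1| + |B2|)) + (|C1| + |C2|) := by
        gcongr <;> [exact (abs_add_le _ _).trans (by gcongr; exact abs_add_le _ _); exact abs_add_le _ _]

lemma abs4 (P Q R S : ℝ) : |P - Q + R - S| ≤ |P| + |Q| + |R| + |S| := by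
  calc |P - Q + R - S| ≤ |P - Q + R| + |S| := abs_sub _ _
    _ ≤ (|P - Q| + |R|) + |S| := by gcongr; exact abs_add_le _ _
    _ ≤ ((|P| + |Q|) + |R|) + |S| := by
        gcongr
        exact abs_sub _ _
    _ = |P| + |Q| + |R| + |S| := by ring

section
variable {c M w y a1 b1 a0 b0 p q s : ℝ}

/-- common hypotheses packaged -/
lemma aux_bounds (hc : 0 < c) (hw : w = 0 ∨ w = 1) (hy : |y| ≤ M)
    (ha1 : |a1| ≤ M) (hab1 : |a1 + b1| ≤ M) (ha0 : |a0| ≤ M) (hab0 : |a0 + b0| ≤ M)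
    (hd1 : c ≤ p + s * q) (hd2 : p + s * q ≤ 1 - c) (hs0 : 0 ≤ s) (hs1 : s ≤ 1) :
    |w| ≤ 1 ∧ |1 - w| ≤ 1 ∧ |b1| ≤ 2 * M ∧ |b0| ≤ 2 * M ∧
      |y - (a1 + s * b1)| ≤ 2 * M ∧ |y - (a0 + s * b0)| ≤ 2 * M ∧
      c ≤ 1 - (p + s * q) := by
  have hM : 0 ≤ M := (abs_nonneg y).trans hy
  obtain ⟨hy1, hy2⟩ := abs_le.1 hy
  obtain ⟨h11, h12⟩ := abs_le.1 ha1
  obtain ⟨h21, h22⟩ := abs_le.1 hab1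
  obtain ⟨h01, h02⟩ := abs_le.1 ha0
  obtain ⟨h31, h32⟩ := abs_le.1 hab0
  refine ⟨?_, ?_, ?_, ?_, ?_, ?_, by linarith⟩
  · rcases hw with h | h <;> simp [h]
  · rcases hw with h | h <;> simp [h]
  · exact abs_le.2 ⟨by linarith, by linarith⟩
  · exact abs_le.2 ⟨by linarith, by linarith⟩
  · have e1 : a1 + s * b1 = (1 - s) * a1 + s * (a1 + b1) := by ring
    refine abs_le.2 ⟨?_, ?_⟩ <;> rw [e1] <;> nlinarith
  · have e1 : a0 + s * b0 = (1 - s) * a0 + s * (a0 + b0) := by ring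
    refine abs_le.2 ⟨?_, ?_⟩ <;> rw [e1] <;> nlinarith

lemma phiA_bound (hc : 0 < c) (hw : w = 0 ∨ w = 1) (hy : |y| ≤ M)
    (ha1 : |a1| ≤ M) (hab1 : |a1 + b1| ≤ M) (ha0 : |a0| ≤ M) (hab0 : |a0 + b0| ≤ M)
    (hd1 : c ≤ p + s * q) (hd2 : p + s * q ≤ 1 - c) (hs0 : 0 ≤ s) (hs1 : s ≤ 1) :
    |(a1 + s * b1) - (a0 + s * b0)
      + (w / (p + s * q)) * (y - (a1 + s * b1))
      - ((1 - w) / (1 - (p + s * q))) * (y - (a0 + s * b0))|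
      ≤ M + M + (1 / c * (2 * M) + 1 / c * (2 * M)) := by
  obtain ⟨hW, hW', hb1, hb0, hz1, hz0, he⟩ :=
    aux_bounds hc hw hy ha1 hab1 ha0 hab0 hd1 hd2 hs0 hs1
  have hM : 0 ≤ M := (abs_nonneg y).trans hy
  have e1 : |a1 + s * b1| ≤ M := by
    have e : a1 + s * b1 = (1 - s) * a1 + s * (a1 + b1) := by ring
    obtain ⟨u1, u2⟩ := abs_le.1 ha1; obtain ⟨v1, v2⟩ := abs_le.1 hab1
    refine abs_le.2 ⟨?_, ?_⟩ <;> rw [e] <;> nlinarith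
  have e0 : |a0 + s * b0| ≤ M := by
    have e : a0 + s * b0 = (1 - s) * a0 + s * (a0 + b0) := by ring
    obtain ⟨u1, u2⟩ := abs_le.1 ha0; obtain ⟨v1, v2⟩ := abs_le.1 hab0
    refine abs_le.2 ⟨?_, ?_⟩ <;> rw [e] <;> nlinarith
  calc |(a1 + s * b1) - (a0 + s * b0)
      + (w / (p + s * q)) * (y - (a1 + s * b1))
      - ((1 - w) / (1 - (p + s * q))) * (y - (a0 + s * b0))|
      ≤ |a1 + s * b1| + |a0 + s * b0| + |(w / (p + s * q)) * (y - (a1 + s * b1))|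
        + |((1 - w) / (1 - (p + s * q))) * (y - (a0 + s * b0))| := abs4 _ _ _ _
    _ ≤ M + M + (1 / c * (2 * M) + 1 / c * (2 * M)) := by
        have t1 : |(w / (p + s * q)) * (y - (a1 + s * b1))| ≤ 1 / c * (2 * M) :=
          mul_abs_le' (frac_bound' hW hc hd1) hz1
        have t2 : |((1 - w) / (1 - (p + s * q))) * (y - (a0 + s * b0))| ≤ 1 / c * (2 * M) :=
          mul_abs_le' (frac_bound' hW' hc he) hz0
        linarith
end

section
variable {c M w y a1 b1 a0 b0 p q s : ℝ}

lemma phiB_bound (hc : 0 < c) (hw : w = 0 ∨ w = 1) (hy : |y| ≤ M)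
    (ha1 : |a1| ≤ M) (hab1 : |a1 + b1| ≤ M) (ha0 : |a0| ≤ M) (hab0 : |a0 + b0| ≤ M)
    (hd1 : c ≤ p + s * q) (hd2 : p + s * q ≤ 1 - c) (hs0 : 0 ≤ s) (hs1 : s ≤ 1)
    (hq : |q| ≤ 1) :
    |(b1 - b0)
      + ((-(w * q)) / (p + s * q) ^ 2 * (y - (a1 + s * b1)) + (w / (p + s * q)) * (-b1))
      - (((1 - w) * q) / (1 - (p + s * q)) ^ 2 * (y - (a0 + s * b0))
          + ((1 - w) / (1 - (p + s * q))) * (-b0))|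
      ≤ 4 * M + (1 / c ^ 2 * (2 * M) + 1 / c * (2 * M))
          + (1 / c ^ 2 * (2 * M) + 1 / c * (2 * M)) := by
  obtain ⟨hW, hW', hb1, hb0, hz1, hz0, he⟩ :=
    aux_bounds hc hw hy ha1 hab1 ha0 hab0 hd1 hd2 hs0 hs1
  have hc2 : (0:ℝ) < c ^ 2 := by positivity
  have hd1sq : c ^ 2 ≤ (p + s * q) ^ 2 := by nlinarith
  have hesq : c ^ 2 ≤ (1 - (p + s * q)) ^ 2 := by nlinarith
  have hwq1 : |-(w * q)| ≤ 1 := by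
    rw [abs_neg, abs_mul]
    calc |w| * |q| ≤ 1 * 1 := mul_le_mul hW hq (abs_nonneg _) zero_le_one
      _ = 1 := one_mul 1
  have hwq2 : |(1 - w) * q| ≤ 1 := by
    rw [abs_mul]
    calc |1 - w| * |q| ≤ 1 * 1 := mul_le_mul hW' hq (abs_nonneg _) zero_le_one
      _ = 1 := one_mul 1
  have hA : |b1 - b0| ≤ 4 * M := (abs_sub _ _).trans (by linarith)
  have t1 : |(-(w * q)) / (p + s * q) ^ 2 * (y - (a1 + s * b1))| ≤ 1 / c ^ 2 * (2 * M) :=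
    mul_abs_le' (frac_bound' hwq1 hc2 hd1sq) hz1
  have t2 : |(w / (p + s * q)) * (-b1)| ≤ 1 / c * (2 * M) :=
    mul_abs_le' (frac_bound' hW hc hd1) (by rwa [abs_neg])
  have t3 : |((1 - w) * q) / (1 - (p + s * q)) ^ 2 * (y - (a0 + s * b0))|
      ≤ 1 / c ^ 2 * (2 * M) := mul_abs_le' (frac_bound' hwq2 hc2 hesq) hz0
  have t4 : |((1 - w) / (1 - (p + s * q))) * (-b0)| ≤ 1 / c * (2 * M) :=
    mul_abs_le' (frac_bound' hW' hc he) (by rwa [abs_neg])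
  calc _ ≤ |b1 - b0| + (|(-(w * q)) / (p + s * q) ^ 2 * (y - (a1 + s * b1))|
        + |(w / (p + s * q)) * (-b1)|)
        + (|((1 - w) * q) / (1 - (p + s * q)) ^ 2 * (y - (a0 + s * b0))|
        + |((1 - w) / (1 - (p + s * q))) * (-b0)|) := abs5 _ _ _ _ _
    _ ≤ _ := by linarith

lemma phiC_bound (hc : 0 < c) (hw : w = 0 ∨ w = 1) (hy : |y| ≤ M)
    (ha1 : |a1| ≤ M) (hab1 : |a1 + b1| ≤ M) (ha0 : |a0| ≤ M) (hab0 : |a0 + b0| ≤ M)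
    (hd1 : c ≤ p + s * q) (hd2 : p + s * q ≤ 1 - c) (hs0 : 0 ≤ s) (hs1 : s ≤ 1) :
    |2 * w * q * (b1 * (p + s * q) + q * (y - (a1 + s * b1))) / (p + s * q) ^ 3
      - 2 * (1 - w) * q * (q * (y - (a0 + s * b0)) - b0 * (1 - (p + s * q))) / (1 - (p + s * q)) ^ 3|
      ≤ 2 / c ^ 3 * (|q| * |b1| + |q| * |b0| + 4 * M * (|q| * |q|)) := by
  obtain ⟨hW, hW', hb1, hb0, hz1, hz0, he⟩ :=
    aux_bounds hc hw hy ha1 hab1 ha0 hab0 hd1 hd2 hs0 hs1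
  have hM : 0 ≤ M := (abs_nonneg y).trans hy
  have hc3 : (0:ℝ) < c ^ 3 := by positivity
  have hdcb : c ^ 3 ≤ (p + s * q) ^ 3 := pow_le_pow_left₀ hc.le hd1 3
  have hecb : c ^ 3 ≤ (1 - (p + s * q)) ^ 3 := pow_le_pow_left₀ hc.le he 3
  have hd01 : |p + s * q| ≤ 1 := abs_le.2 ⟨by linarith, by linarith⟩
  have he01 : |1 - (p + s * q)| ≤ 1 := abs_le.2 ⟨by linarith, by linarith⟩
  have h2wq : |2 * w * q| ≤ 2 * |q| := by
    rw [abs_mul, abs_mul, abs_two]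
    calc 2 * |w| * |q| ≤ 2 * 1 * |q| := by gcongr
      _ = 2 * |q| := by ring
  have h2wq' : |2 * (1 - w) * q| ≤ 2 * |q| := by
    rw [abs_mul, abs_mul, abs_two]
    calc 2 * |1 - w| * |q| ≤ 2 * 1 * |q| := by gcongr
      _ = 2 * |q| := by ring
  have hX1 : |b1 * (p + s * q) + q * (y - (a1 + s * b1))| ≤ |b1| * 1 + |q| * (2 * M) :=
    (abs_add_le _ _).trans (add_le_add (mul_abs_le' le_rfl hd01) (mul_abs_le' le_rfl hz1))
  have hX0 : |q * (y - (a0 + s * b0)) - b0 * (1 - (p + s * q))| ≤ |q| * (2 * M) + |b0| * 1 :=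
    (abs_sub _ _).trans (add_le_add (mul_abs_le' le_rfl hz0) (mul_abs_le' le_rfl he01))
  have T1 : |2 * w * q * (b1 * (p + s * q) + q * (y - (a1 + s * b1))) / (p + s * q) ^ 3|
      ≤ 2 * |q| * (|b1| * 1 + |q| * (2 * M)) / c ^ 3 :=
    frac_bound' (mul_abs_le' h2wq hX1) hc3 hdcb
  have T2 : |2 * (1 - w) * q * (q * (y - (a0 + s * b0)) - b0 * (1 - (p + s * q)))
        / (1 - (p + s * q)) ^ 3|
      ≤ 2 * |q| * (|q| * (2 * M) + |b0| * 1) / c ^ 3 :=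
    frac_bound' (mul_abs_le' h2wq' hX0) hc3 hecb
  calc _ ≤ |2 * w * q * (b1 * (p + s * q) + q * (y - (a1 + s * b1))) / (p + s * q) ^ 3|
        + |2 * (1 - w) * q * (q * (y - (a0 + s * b0)) - b0 * (1 - (p + s * q)))
            / (1 - (p + s * q)) ^ 3| := abs_sub _ _
    _ ≤ 2 * |q| * (|b1| * 1 + |q| * (2 * M)) / c ^ 3
        + 2 * |q| * (|q| * (2 * M) + |b0| * 1) / c ^ 3 := add_le_add T1 T2
    _ = 2 / c ^ 3 * (|q| * |b1| + |q| * |b0| + 4 * M * (|q| * |q|)) := by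
        field_simp
        ring
end


lemma l2_cauchy {Ω : Type} [MeasurableSpace Ω] {μ : Measure Ω} {f g : Ω → ℝ}
    (hf : MemLp f 2 μ) (hg : MemLp g 2 μ) :
    ∫ ω, |f ω| * |g ω| ∂μ ≤ (eLpNorm f 2 μ).toReal * (eLpNorm g 2 μ).toReal := by
  have hpq : Real.HolderConjugate 2 2 := Real.holderConjugate_iff.mpr ⟨one_lt_two, by norm_num⟩
  have h2 : (ENNReal.ofReal (2 : ℝ)) = 2 := by
    simp [ENNReal.ofReal_ofNat]
  have H := integral_mul_norm_le_Lp_mul_Lq hpq (h2 ▸ hf) (h2 ▸ hg)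
  have hef := hf.eLpNorm_eq_integral_rpow_norm (by norm_num) (by norm_num)
  have heg := hg.eLpNorm_eq_integral_rpow_norm (by norm_num) (by norm_num)
  have h2t : (2 : ℝ≥0∞).toReal = (2 : ℝ) := by norm_num
  have hif : 0 ≤ ∫ a, ‖f a‖ ^ (2:ℝ) ∂μ := integral_nonneg fun a => by positivity
  have hig : 0 ≤ ∫ a, ‖g a‖ ^ (2:ℝ) ∂μ := integral_nonneg fun a => by positivity
  have hf' : (eLpNorm f 2 μ).toReal = (∫ a, ‖f a‖ ^ (2:ℝ) ∂μ) ^ ((2:ℝ)⁻¹) := by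
    rw [hef, h2t, ENNReal.toReal_ofReal (by positivity)]
  have hg' : (eLpNorm g 2 μ).toReal = (∫ a, ‖g a‖ ^ (2:ℝ) ∂μ) ^ ((2:ℝ)⁻¹) := by
    rw [heg, h2t, ENNReal.toReal_ofReal (by positivity)]
  calc ∫ ω, |f ω| * |g ω| ∂μ = ∫ ω, ‖f ω‖ * ‖g ω‖ ∂μ := by
        simp [Real.norm_eq_abs]
    _ ≤ (∫ a, ‖f a‖ ^ (2:ℝ) ∂μ) ^ (1 / (2:ℝ)) * (∫ a, ‖g a‖ ^ (2:ℝ) ∂μ) ^ (1 / (2:ℝ)) := H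
    _ = (eLpNorm f 2 μ).toReal * (eLpNorm g 2 μ).toReal := by
        rw [hf', hg', one_div]


lemma den_facts {c p hv x : ℝ} (hc : 0 < c) (h1 : c ≤ p) (h2 : p ≤ 1 - c)
    (h3 : c ≤ hv) (h4 : hv ≤ 1 - c) (hx0 : 0 ≤ x) (hx1 : x ≤ 1) :
    c ≤ p + x * (hv - p) ∧ p + x * (hv - p) ≤ 1 - c := by
  constructor <;> nlinarith

open MeasureTheory ProbabilityTheory

/-- Second-order (product) property of the AIPW score: the second derivative of the
expected score along the path `η⁰ + r (η - η⁰)` is bounded by a product of `L²`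
estimation errors, with a constant depending only on the bounds `c` and `M`. -/
theorem aipw_second_derivative_product_bound (c M : ℝ) (hc : 0 < c) (hc2 : c < 1/2)
    (hM : 0 < M) :
    ∃ C : ℝ, 0 < C ∧
      ∀ {Ω : Type} [MeasurableSpace Ω] (μ : Measure Ω) [IsProbabilityMeasure μ]
        {E F : Type} [MeasurableSpace E] [MeasurableSpace F]
        (W : Ω → ℝ) (D : Ω → E) (U : Ω → F) (Y : Ω → ℝ)
        (g1₀ g0₀ g1 g0 : E → ℝ) (h₀ h : F → ℝ),
        Measurable W → Measurable D → Measurable U → Measurable Y →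
        Measurable g1₀ → Measurable g0₀ → Measurable h₀ →
        Measurable g1 → Measurable g0 → Measurable h →
        (∀ ω, W ω = 0 ∨ W ω = 1) →
        (∀ᵐ ω ∂μ, |Y ω| ≤ M ∧ |g1₀ (D ω)| ≤ M ∧ |g0₀ (D ω)| ≤ M ∧
          |g1 (D ω)| ≤ M ∧ |g0 (D ω)| ≤ M) →
        (∀ᵐ ω ∂μ, c ≤ h₀ (U ω) ∧ h₀ (U ω) ≤ 1 - c ∧ c ≤ h (U ω) ∧ h (U ω) ≤ 1 - c) →
        ∀ r ∈ Set.Ioo (0 : ℝ) 1,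
          |deriv (deriv (fun s : ℝ => ∫ ω,
            ((g1₀ (D ω) + s * (g1 (D ω) - g1₀ (D ω)))
              - (g0₀ (D ω) + s * (g0 (D ω) - g0₀ (D ω)))
              + (W ω / (h₀ (U ω) + s * (h (U ω) - h₀ (U ω))))
                  * (Y ω - (g1₀ (D ω) + s * (g1 (D ω) - g1₀ (D ω))))
              - ((1 - W ω) / (1 - (h₀ (U ω) + s * (h (U ω) - h₀ (U ω)))))
                  * (Y ω - (g0₀ (D ω) + s * (g0 (D ω) - g0₀ (D ω))))) ∂μ)) r|
          ≤ C * ((eLpNorm (fun ω => g1 (D ω) - g1₀ (D ω)) 2 μ).toReal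
                + (eLpNorm (fun ω => g0 (D ω) - g0₀ (D ω)) 2 μ).toReal
                + (eLpNorm (fun ω => h (U ω) - h₀ (U ω)) 2 μ).toReal)
              * (eLpNorm (fun ω => h (U ω) - h₀ (U ω)) 2 μ).toReal := by
  refine ⟨2 / c ^ 3 * (1 + 4 * M), by positivity, ?_⟩
  intro Ω _ μ _ E F _ _ W D U Y g1₀ g0₀ g1 g0 h₀ h mW mD mU mY mg1₀ mg0₀ mh₀ mg1 mg0 mh
    hW01 hbd hcb r hr
  obtain ⟨hr0, hr1⟩ := hr
  -- measurability of the three integrand families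
  have measA : ∀ s : ℝ, Measurable (fun ω => phiA (W ω) (Y ω) (g1₀ (D ω)) (g1 (D ω) - g1₀ (D ω)) (g0₀ (D ω)) (g0 (D ω) - g0₀ (D ω)) (h₀ (U ω)) (h (U ω) - h₀ (U ω)) s) := by
    intro s; unfold phiA; fun_prop
  have measB : ∀ s : ℝ, Measurable (fun ω => phiB (W ω) (Y ω) (g1₀ (D ω)) (g1 (D ω) - g1₀ (D ω)) (g0₀ (D ω)) (g0 (D ω) - g0₀ (D ω)) (h₀ (U ω)) (h (U ω) - h₀ (U ω)) s) := by
    intro s; unfold phiB; fun_prop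
  have measC : ∀ s : ℝ, Measurable (fun ω => phiC (W ω) (Y ω) (g1₀ (D ω)) (g1 (D ω) - g1₀ (D ω)) (g0₀ (D ω)) (g0 (D ω) - g0₀ (D ω)) (h₀ (U ω)) (h (U ω) - h₀ (U ω)) s) := by
    intro s; unfold phiC; fun_prop
  have mq : Measurable (fun ω => h (U ω) - h₀ (U ω)) := (mh.comp mU).sub (mh₀.comp mU)
  have mb1 : Measurable (fun ω => g1 (D ω) - g1₀ (D ω)) := (mg1.comp mD).sub (mg1₀.comp mD)
  have mb0 : Measurable (fun ω => g0 (D ω) - g0₀ (D ω)) := (mg0.comp mD).sub (mg0₀.comp mD)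
  -- ball inclusion
  have hball : ∀ s : ℝ, s ∈ Set.Ioo (0:ℝ) 1 →
      ∀ x ∈ Metric.ball s (min s (1 - s)), 0 ≤ x ∧ x ≤ 1 := by
    intro s hs x hx
    rw [Metric.mem_ball, Real.dist_eq] at hx
    obtain ⟨u1, u2⟩ := abs_lt.1 hx
    have h1 := min_le_left s (1 - s)
    have h2 := min_le_right s (1 - s)
    exact ⟨by linarith, by linarith⟩
  -- the a.e. pointwise hypotheses, repackaged for the bound lemmas
  have haeHyp : ∀ᵐ ω ∂μ, |Y ω| ≤ M ∧ |g1₀ (D ω)| ≤ M ∧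
      |g1₀ (D ω) + (g1 (D ω) - g1₀ (D ω))| ≤ M ∧ |g0₀ (D ω)| ≤ M ∧
      |g0₀ (D ω) + (g0 (D ω) - g0₀ (D ω))| ≤ M ∧
      c ≤ h₀ (U ω) ∧ h₀ (U ω) ≤ 1 - c ∧ c ≤ h (U ω) ∧ h (U ω) ≤ 1 - c ∧
      |h (U ω) - h₀ (U ω)| ≤ 1 := by
    filter_upwards [hbd, hcb] with ω hb hcc
    obtain ⟨hy, h1, h0, hg1', hg0'⟩ := hb
    obtain ⟨c1, c2, c3, c4⟩ := hcc
    refine ⟨hy, h1, ?_, h0, ?_, c1, c2, c3, c4, ?_⟩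
    · rw [show g1₀ (D ω) + (g1 (D ω) - g1₀ (D ω)) = g1 (D ω) from by ring]; exact hg1'
    · rw [show g0₀ (D ω) + (g0 (D ω) - g0₀ (D ω)) = g0 (D ω) from by ring]; exact hg0'
    · exact abs_le.2 ⟨by linarith, by linarith⟩
  -- integrability of phiA and phiB at a fixed parameter in [0,1]
  have intA : ∀ s : ℝ, 0 ≤ s → s ≤ 1 → Integrable (fun ω => phiA (W ω) (Y ω) (g1₀ (D ω)) (g1 (D ω) - g1₀ (D ω)) (g0₀ (D ω)) (g0 (D ω) - g0₀ (D ω)) (h₀ (U ω)) (h (U ω) - h₀ (U ω)) s) μ := by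
    intro s hs0 hs1
    refine Integrable.mono' (integrable_const (M + M + (1 / c * (2 * M) + 1 / c * (2 * M))))
      (measA s).aestronglyMeasurable ?_
    filter_upwards [haeHyp] with ω hb
    obtain ⟨hy, h1, h1', h0, h0', c1, c2, c3, c4, hq1⟩ := hb
    obtain ⟨hd1, hd2⟩ := den_facts hc c1 c2 c3 c4 hs0 hs1
    rw [Real.norm_eq_abs]
    exact phiA_bound hc (hW01 ω) hy h1 h1' h0 h0' hd1 hd2 hs0 hs1
  have intB : ∀ s : ℝ, 0 ≤ s → s ≤ 1 → Integrable (fun ω => phiB (W ω) (Y ω) (g1₀ (D ω)) (g1 (D ω) - g1₀ (D ω)) (g0₀ (D ω)) (g0 (D ω) - g0₀ (D ω)) (h₀ (U ω)) (h (U ω) - h₀ (U ω)) s) μ := by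
    intro s hs0 hs1
    refine Integrable.mono' (integrable_const (4 * M + (1 / c ^ 2 * (2 * M) + 1 / c * (2 * M))
      + (1 / c ^ 2 * (2 * M) + 1 / c * (2 * M)))) (measB s).aestronglyMeasurable ?_
    filter_upwards [haeHyp] with ω hb
    obtain ⟨hy, h1, h1', h0, h0', c1, c2, c3, c4, hq1⟩ := hb
    obtain ⟨hd1, hd2⟩ := den_facts hc c1 c2 c3 c4 hs0 hs1
    rw [Real.norm_eq_abs]
    exact phiB_bound hc (hW01 ω) hy h1 h1' h0 h0' hd1 hd2 hs0 hs1 hq1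
  -- Step A: first derivative of the parametric integral on (0,1)
  have hD1 : ∀ s ∈ Set.Ioo (0:ℝ) 1,
      HasDerivAt (fun t : ℝ => ∫ ω, phiA (W ω) (Y ω) (g1₀ (D ω)) (g1 (D ω) - g1₀ (D ω)) (g0₀ (D ω)) (g0 (D ω) - g0₀ (D ω)) (h₀ (U ω)) (h (U ω) - h₀ (U ω)) t ∂μ)
        (∫ ω, phiB (W ω) (Y ω) (g1₀ (D ω)) (g1 (D ω) - g1₀ (D ω)) (g0₀ (D ω)) (g0 (D ω) - g0₀ (D ω)) (h₀ (U ω)) (h (U ω) - h₀ (U ω)) s ∂μ) s := by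
    intro s hs
    have hε : 0 < min s (1 - s) := lt_min hs.1 (by linarith [hs.2])
    have key := hasDerivAt_integral_of_dominated_loc_of_deriv_le (𝕜 := ℝ) (μ := μ)
      (F := fun (t : ℝ) ω => phiA (W ω) (Y ω) (g1₀ (D ω)) (g1 (D ω) - g1₀ (D ω)) (g0₀ (D ω)) (g0 (D ω) - g0₀ (D ω)) (h₀ (U ω)) (h (U ω) - h₀ (U ω)) t)
      (F' := fun (t : ℝ) ω => phiB (W ω) (Y ω) (g1₀ (D ω)) (g1 (D ω) - g1₀ (D ω)) (g0₀ (D ω)) (g0 (D ω) - g0₀ (D ω)) (h₀ (U ω)) (h (U ω) - h₀ (U ω)) t)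
      (bound := fun _ => 4 * M + (1 / c ^ 2 * (2 * M) + 1 / c * (2 * M))
        + (1 / c ^ 2 * (2 * M) + 1 / c * (2 * M)))
      (Metric.ball_mem_nhds s hε)
      (Filter.Eventually.of_forall fun t => (measA t).aestronglyMeasurable)
      (intA s hs.1.le hs.2.le)
      ((measB s).aestronglyMeasurable)
      ?_ (integrable_const _) ?_
    · exact key.2
    · filter_upwards [haeHyp] with ω hb
      intro x hx
      obtain ⟨hx0, hx1⟩ := hball s hs x hx
      obtain ⟨hy, h1, h1', h0, h0', c1, c2, c3, c4, hq1⟩ := hb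
      obtain ⟨hd1, hd2⟩ := den_facts hc c1 c2 c3 c4 hx0 hx1
      rw [Real.norm_eq_abs]
      exact phiB_bound hc (hW01 ω) hy h1 h1' h0 h0' hd1 hd2 hx0 hx1 hq1
    · filter_upwards [haeHyp] with ω hb
      intro x hx
      obtain ⟨hx0, hx1⟩ := hball s hs x hx
      obtain ⟨hy, h1, h1', h0, h0', c1, c2, c3, c4, hq1⟩ := hb
      obtain ⟨hd1, hd2⟩ := den_facts hc c1 c2 c3 c4 hx0 hx1
      exact hasDerivAt_phiA _ _ _ _ _ _ _ _ _
        (ne_of_gt (lt_of_lt_of_le hc hd1)) (ne_of_gt (lt_of_lt_of_le hc (by linarith)))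
  -- Step B: second derivative at r
  have hεr : 0 < min r (1 - r) := lt_min hr0 (by linarith)
  have hbndC : ∀ᵐ ω ∂μ, ∀ x ∈ Metric.ball r (min r (1 - r)),
      ‖phiC (W ω) (Y ω) (g1₀ (D ω)) (g1 (D ω) - g1₀ (D ω)) (g0₀ (D ω)) (g0 (D ω) - g0₀ (D ω)) (h₀ (U ω)) (h (U ω) - h₀ (U ω)) x‖ ≤ 2 / c ^ 3 * (|h (U ω) - h₀ (U ω)| * |g1 (D ω) - g1₀ (D ω)|
        + |h (U ω) - h₀ (U ω)| * |g0 (D ω) - g0₀ (D ω)|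
        + 4 * M * (|h (U ω) - h₀ (U ω)| * |h (U ω) - h₀ (U ω)|)) := by
    filter_upwards [haeHyp] with ω hb
    intro x hx
    obtain ⟨hx0, hx1⟩ := hball r ⟨hr0, hr1⟩ x hx
    obtain ⟨hy, h1, h1', h0, h0', c1, c2, c3, c4, hq1⟩ := hb
    obtain ⟨hd1, hd2⟩ := den_facts hc c1 c2 c3 c4 hx0 hx1
    rw [Real.norm_eq_abs]
    exact phiC_bound hc (hW01 ω) hy h1 h1' h0 h0' hd1 hd2 hx0 hx1
  have iQB1 : Integrable (fun ω => |h (U ω) - h₀ (U ω)| * |g1 (D ω) - g1₀ (D ω)|) μ := by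
    refine Integrable.mono' (integrable_const (1 * (2 * M))) (mq.abs.mul mb1.abs).aestronglyMeasurable ?_
    filter_upwards [haeHyp] with ω hb
    obtain ⟨hy, h1, h1', h0, h0', c1, c2, c3, c4, hq1⟩ := hb
    have e1 : |g1 (D ω)| ≤ M := by
      rw [show g1 (D ω) = g1₀ (D ω) + (g1 (D ω) - g1₀ (D ω)) from by ring]; exact h1'
    have hb1 : |g1 (D ω) - g1₀ (D ω)| ≤ 2 * M := by
      have := abs_sub (g1 (D ω)) (g1₀ (D ω)); linarith
    rw [Real.norm_eq_abs, abs_of_nonneg (by positivity)]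
    exact mul_le_mul hq1 hb1 (abs_nonneg _) zero_le_one
  have iQB0 : Integrable (fun ω => |h (U ω) - h₀ (U ω)| * |g0 (D ω) - g0₀ (D ω)|) μ := by
    refine Integrable.mono' (integrable_const (1 * (2 * M))) (mq.abs.mul mb0.abs).aestronglyMeasurable ?_
    filter_upwards [haeHyp] with ω hb
    obtain ⟨hy, h1, h1', h0, h0', c1, c2, c3, c4, hq1⟩ := hb
    have e1 : |g0 (D ω)| ≤ M := by
      rw [show g0 (D ω) = g0₀ (D ω) + (g0 (D ω) - g0₀ (D ω)) from by ring]; exact h0'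
    have hb0 : |g0 (D ω) - g0₀ (D ω)| ≤ 2 * M := by
      have := abs_sub (g0 (D ω)) (g0₀ (D ω)); linarith
    rw [Real.norm_eq_abs, abs_of_nonneg (by positivity)]
    exact mul_le_mul hq1 hb0 (abs_nonneg _) zero_le_one
  have iQQ : Integrable (fun ω => |h (U ω) - h₀ (U ω)| * |h (U ω) - h₀ (U ω)|) μ := by
    refine Integrable.mono' (integrable_const (1 * 1)) (mq.abs.mul mq.abs).aestronglyMeasurable ?_
    filter_upwards [haeHyp] with ω hb
    have hq1 := hb.2.2.2.2.2.2.2.2.2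
    rw [Real.norm_eq_abs, abs_of_nonneg (by positivity)]
    exact mul_le_mul hq1 hq1 (abs_nonneg _) zero_le_one
  have iSum : Integrable (fun ω => |h (U ω) - h₀ (U ω)| * |g1 (D ω) - g1₀ (D ω)|
      + |h (U ω) - h₀ (U ω)| * |g0 (D ω) - g0₀ (D ω)|
      + 4 * M * (|h (U ω) - h₀ (U ω)| * |h (U ω) - h₀ (U ω)|)) μ :=
    (iQB1.add iQB0).add (iQQ.const_mul (4 * M))
  have ibound : Integrable (fun ω => 2 / c ^ 3 * (|h (U ω) - h₀ (U ω)| * |g1 (D ω) - g1₀ (D ω)|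
      + |h (U ω) - h₀ (U ω)| * |g0 (D ω) - g0₀ (D ω)|
      + 4 * M * (|h (U ω) - h₀ (U ω)| * |h (U ω) - h₀ (U ω)|))) μ := iSum.const_mul _
  have hdiffC : ∀ᵐ ω ∂μ, ∀ x ∈ Metric.ball r (min r (1 - r)),
      HasDerivAt (fun t => phiB (W ω) (Y ω) (g1₀ (D ω)) (g1 (D ω) - g1₀ (D ω)) (g0₀ (D ω)) (g0 (D ω) - g0₀ (D ω)) (h₀ (U ω)) (h (U ω) - h₀ (U ω)) t) (phiC (W ω) (Y ω) (g1₀ (D ω)) (g1 (D ω) - g1₀ (D ω)) (g0₀ (D ω)) (g0 (D ω) - g0₀ (D ω)) (h₀ (U ω)) (h (U ω) - h₀ (U ω)) x) x := by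
    filter_upwards [haeHyp] with ω hb
    intro x hx
    obtain ⟨hx0, hx1⟩ := hball r ⟨hr0, hr1⟩ x hx
    obtain ⟨hy, h1, h1', h0, h0', c1, c2, c3, c4, hq1⟩ := hb
    obtain ⟨hd1, hd2⟩ := den_facts hc c1 c2 c3 c4 hx0 hx1
    exact hasDerivAt_phiB _ _ _ _ _ _ _ _ _
      (ne_of_gt (lt_of_lt_of_le hc hd1)) (ne_of_gt (lt_of_lt_of_le hc (by linarith)))
  have key2 := hasDerivAt_integral_of_dominated_loc_of_deriv_le (𝕜 := ℝ) (μ := μ)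
    (F := fun (t : ℝ) ω => phiB (W ω) (Y ω) (g1₀ (D ω)) (g1 (D ω) - g1₀ (D ω)) (g0₀ (D ω)) (g0 (D ω) - g0₀ (D ω)) (h₀ (U ω)) (h (U ω) - h₀ (U ω)) t)
    (F' := fun (t : ℝ) ω => phiC (W ω) (Y ω) (g1₀ (D ω)) (g1 (D ω) - g1₀ (D ω)) (g0₀ (D ω)) (g0 (D ω) - g0₀ (D ω)) (h₀ (U ω)) (h (U ω) - h₀ (U ω)) t)
    (Metric.ball_mem_nhds r hεr)
    (Filter.Eventually.of_forall fun t => (measB t).aestronglyMeasurable)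
    (intB r hr0.le hr1.le)
    ((measC r).aestronglyMeasurable)
    hbndC ibound hdiffC
  -- rewrite the goal
  suffices hS : |deriv (deriv (fun s : ℝ => ∫ ω, phiA (W ω) (Y ω) (g1₀ (D ω)) (g1 (D ω) - g1₀ (D ω)) (g0₀ (D ω)) (g0 (D ω) - g0₀ (D ω)) (h₀ (U ω)) (h (U ω) - h₀ (U ω)) s ∂μ)) r|
      ≤ 2 / c ^ 3 * (1 + 4 * M)
          * ((eLpNorm (fun ω => g1 (D ω) - g1₀ (D ω)) 2 μ).toReal
            + (eLpNorm (fun ω => g0 (D ω) - g0₀ (D ω)) 2 μ).toReal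
            + (eLpNorm (fun ω => h (U ω) - h₀ (U ω)) 2 μ).toReal)
          * (eLpNorm (fun ω => h (U ω) - h₀ (U ω)) 2 μ).toReal by exact hS
  have hEqF : deriv (fun t : ℝ => ∫ ω, phiA (W ω) (Y ω) (g1₀ (D ω)) (g1 (D ω) - g1₀ (D ω)) (g0₀ (D ω)) (g0 (D ω) - g0₀ (D ω)) (h₀ (U ω)) (h (U ω) - h₀ (U ω)) t ∂μ)
      =ᶠ[nhds r] (fun t : ℝ => ∫ ω, phiB (W ω) (Y ω) (g1₀ (D ω)) (g1 (D ω) - g1₀ (D ω)) (g0₀ (D ω)) (g0 (D ω) - g0₀ (D ω)) (h₀ (U ω)) (h (U ω) - h₀ (U ω)) t ∂μ) :=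
    Filter.eventuallyEq_of_mem (isOpen_Ioo.mem_nhds ⟨hr0, hr1⟩)
      (fun s hs => (hD1 s hs).deriv)
  rw [hEqF.deriv_eq, key2.2.deriv]
  -- final estimate
  have memq : MemLp (fun ω => h (U ω) - h₀ (U ω)) 2 μ := by
    refine MemLp.of_bound mq.aestronglyMeasurable 1 ?_
    filter_upwards [haeHyp] with ω hb
    rw [Real.norm_eq_abs]; exact hb.2.2.2.2.2.2.2.2.2
  have memb1 : MemLp (fun ω => g1 (D ω) - g1₀ (D ω)) 2 μ := by
    refine MemLp.of_bound mb1.aestronglyMeasurable (2 * M) ?_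
    filter_upwards [haeHyp] with ω hb
    obtain ⟨hy, h1, h1', h0, h0', _⟩ := hb
    rw [Real.norm_eq_abs]
    have := abs_sub (g1 (D ω)) (g1₀ (D ω))
    have e1 : |g1 (D ω)| ≤ M := by
      rw [show g1 (D ω) = g1₀ (D ω) + (g1 (D ω) - g1₀ (D ω)) from by ring]; exact h1'
    linarith
  have memb0 : MemLp (fun ω => g0 (D ω) - g0₀ (D ω)) 2 μ := by
    refine MemLp.of_bound mb0.aestronglyMeasurable (2 * M) ?_
    filter_upwards [haeHyp] with ω hb
    obtain ⟨hy, h1, h1', h0, h0', _⟩ := hb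
    rw [Real.norm_eq_abs]
    have := abs_sub (g0 (D ω)) (g0₀ (D ω))
    have e1 : |g0 (D ω)| ≤ M := by
      rw [show g0 (D ω) = g0₀ (D ω) + (g0 (D ω) - g0₀ (D ω)) from by ring]; exact h0'
    linarith
  set X1 := (eLpNorm (fun ω => g1 (D ω) - g1₀ (D ω)) 2 μ).toReal with hX1d
  set X0 := (eLpNorm (fun ω => g0 (D ω) - g0₀ (D ω)) 2 μ).toReal with hX0d
  set Xq := (eLpNorm (fun ω => h (U ω) - h₀ (U ω)) 2 μ).toReal with hXqd
  have hX1n : 0 ≤ X1 := ENNReal.toReal_nonneg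
  have hX0n : 0 ≤ X0 := ENNReal.toReal_nonneg
  have hXqn : 0 ≤ Xq := ENNReal.toReal_nonneg
  have e1 := l2_cauchy memq memb1
  have e2 := l2_cauchy memq memb0
  have e3 := l2_cauchy memq memq
  have hbd0 : ∀ᵐ ω ∂μ, ‖phiC (W ω) (Y ω) (g1₀ (D ω)) (g1 (D ω) - g1₀ (D ω)) (g0₀ (D ω)) (g0 (D ω) - g0₀ (D ω)) (h₀ (U ω)) (h (U ω) - h₀ (U ω)) r‖
      ≤ 2 / c ^ 3 * (|h (U ω) - h₀ (U ω)| * |g1 (D ω) - g1₀ (D ω)|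
        + |h (U ω) - h₀ (U ω)| * |g0 (D ω) - g0₀ (D ω)|
        + 4 * M * (|h (U ω) - h₀ (U ω)| * |h (U ω) - h₀ (U ω)|)) := by
    filter_upwards [hbndC] with ω hb
    exact hb r (Metric.mem_ball_self hεr)
  calc |∫ ω, phiC (W ω) (Y ω) (g1₀ (D ω)) (g1 (D ω) - g1₀ (D ω)) (g0₀ (D ω)) (g0 (D ω) - g0₀ (D ω)) (h₀ (U ω)) (h (U ω) - h₀ (U ω)) r ∂μ|
      ≤ ∫ ω, 2 / c ^ 3 * (|h (U ω) - h₀ (U ω)| * |g1 (D ω) - g1₀ (D ω)|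
        + |h (U ω) - h₀ (U ω)| * |g0 (D ω) - g0₀ (D ω)|
        + 4 * M * (|h (U ω) - h₀ (U ω)| * |h (U ω) - h₀ (U ω)|)) ∂μ := by
        rw [← Real.norm_eq_abs]
        exact norm_integral_le_of_norm_le ibound hbd0
    _ = 2 / c ^ 3 * ((∫ ω, |h (U ω) - h₀ (U ω)| * |g1 (D ω) - g1₀ (D ω)| ∂μ)
        + (∫ ω, |h (U ω) - h₀ (U ω)| * |g0 (D ω) - g0₀ (D ω)| ∂μ)
        + 4 * M * (∫ ω, |h (U ω) - h₀ (U ω)| * |h (U ω) - h₀ (U ω)| ∂μ)) := by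
        have s1 := integral_add (μ := μ)
          (f := fun ω => |h (U ω) - h₀ (U ω)| * |g1 (D ω) - g1₀ (D ω)|
            + |h (U ω) - h₀ (U ω)| * |g0 (D ω) - g0₀ (D ω)|)
          (g := fun ω => 4 * M * (|h (U ω) - h₀ (U ω)| * |h (U ω) - h₀ (U ω)|))
          (iQB1.add iQB0) (iQQ.const_mul (4 * M))
        have s2 := integral_add (μ := μ) iQB1 iQB0
        have s3 : ∫ ω, 4 * M * (|h (U ω) - h₀ (U ω)| * |h (U ω) - h₀ (U ω)|) ∂μ
            = 4 * M * ∫ ω, |h (U ω) - h₀ (U ω)| * |h (U ω) - h₀ (U ω)| ∂μ :=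
          integral_const_mul _ _
        beta_reduce at s1 s2
        rw [integral_const_mul, s1, s2, s3]
    _ ≤ 2 / c ^ 3 * (Xq * X1 + Xq * X0 + 4 * M * (Xq * Xq)) := by
        gcongr
    _ ≤ 2 / c ^ 3 * (1 + 4 * M) * (X1 + X0 + Xq) * Xq := by
        have t1 : 0 ≤ 2 / c ^ 3 * (4 * M) * (X1 * Xq) := by positivity
        have t2 : 0 ≤ 2 / c ^ 3 * (4 * M) * (X0 * Xq) := by positivity
        have t3 : 0 ≤ 2 / c ^ 3 * (Xq * Xq) := by positivity
        nlinarith [t1, t2, t3]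
end

section
/- Let φ(η)(s) be the AIPW score with s = (w,u,d,y), and let η = (g1,g0,h) and η⁰ = (g1⁰,g0⁰,h⁰) satisfy: |y|, |g_j(d)|, |g_j⁰(d)| ≤ M a.s. for j = 0,1, and c ≤ h(u), h⁰(u) ≤ 1−c a.s. Then ‖φ(η)(S) − φ(η⁰)(S)‖_{L²} ≤ C·( ‖g1(D)−g1⁰(D)‖_{L²} + ‖g0(D)−g0⁰(D)‖_{L²} + ‖h(U)−h⁰(U)‖_{L²} ), where C depends only on M and c. -/
open MeasureTheory ProbabilityTheory

lemma div_sub_div_abs_bound (u v a b M' c : ℝ) (hc : 0 < c) (ha : c ≤ a) (hb : c ≤ b)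
    (hv : |v| ≤ M') : |u / a - v / b| ≤ |u - v| / c + M' * |a - b| / c ^ 2 := by
  have ha0 : 0 < a := hc.trans_le ha
  have hb0 : 0 < b := hc.trans_le hb
  have key : u / a - v / b = (u - v) / a + v * (b - a) / (a * b) := by
    field_simp
    ring
  rw [key]
  have h1 : |(u - v) / a| ≤ |u - v| / c := by
    rw [abs_div, abs_of_pos ha0]
    exact div_le_div_of_nonneg_left (abs_nonneg _) hc ha
  have h2 : |v * (b - a) / (a * b)| ≤ M' * |a - b| / c ^ 2 := by
    rw [abs_div, abs_mul, abs_of_pos (mul_pos ha0 hb0)]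
    have hM0 : 0 ≤ M' := (abs_nonneg v).trans hv
    have : |v| * |b - a| ≤ M' * |a - b| := by
      rw [abs_sub_comm b a]
      exact mul_le_mul hv le_rfl (abs_nonneg _) hM0
    calc |v| * |b - a| / (a * b) ≤ M' * |a - b| / (a * b) := by
          gcongr
      _ ≤ M' * |a - b| / c ^ 2 := by
          apply div_le_div_of_nonneg_left (by positivity) (by positivity)
          calc c ^ 2 = c * c := sq c
            _ ≤ a * b := mul_le_mul ha hb hc.le ha0.le
  calc |(u - v) / a + v * (b - a) / (a * b)| ≤ |(u - v) / a| + |v * (b - a) / (a * b)| :=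
        abs_add_le _ _
    _ ≤ _ := add_le_add h1 h2

lemma comb_bound (a b H p q : ℝ) (ha : 0 ≤ a) (hb : 0 ≤ b) (hH : 0 ≤ H)
    (hp : 0 ≤ p) (hq : 0 ≤ q) :
    a + b + (b * p + H * q) ≤ (1 + p + q) * (a + b + H) := by
  nlinarith [mul_nonneg hp ha, mul_nonneg hp hH, mul_nonneg hq ha, mul_nonneg hq hb]

lemma aipw_pointwise (M c y g1 g0 g1₀ g0₀ h h₀ w : ℝ) (hM : 0 < M) (hc : 0 < c)
    (hw : w = 0 ∨ w = 1) (hy : |y| ≤ M) (ha1 : |g1| ≤ M) (ha0 : |g0| ≤ M)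
    (hb1 : |g1₀| ≤ M) (hb0 : |g0₀| ≤ M)
    (hh1 : c ≤ h) (hh2 : h ≤ 1 - c) (hH1 : c ≤ h₀) (hH2 : h₀ ≤ 1 - c) :
    |(g1 - g0 + (w / h) * (y - g1) - ((1 - w) / (1 - h)) * (y - g0))
      - (g1₀ - g0₀ + (w / h₀) * (y - g1₀) - ((1 - w) / (1 - h₀)) * (y - g0₀))|
    ≤ (1 + 1/c + 2*M/c^2) * (|g1 - g1₀| + |g0 - g0₀| + |h - h₀|) := by
  have hc1 : c ≤ 1 - h := by linarith
  have hC1 : c ≤ 1 - h₀ := by linarith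
  have hh0 : (0:ℝ) < h := hc.trans_le hh1
  have hH0 : (0:ℝ) < h₀ := hc.trans_le hH1
  have hA : (0:ℝ) ≤ |g1 - g1₀| := abs_nonneg _
  have hB : (0:ℝ) ≤ |g0 - g0₀| := abs_nonneg _
  have hHH : (0:ℝ) ≤ |h - h₀| := abs_nonneg _
  have hicn : (0:ℝ) ≤ 1/c := by positivity
  have hmc : (0:ℝ) ≤ 2*M/c^2 := by positivity
  rcases hw with hw | hw
  · subst hw
    have key : (g1 - g0 + ((0:ℝ) / h) * (y - g1) - ((1 - 0) / (1 - h)) * (y - g0))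
        - (g1₀ - g0₀ + ((0:ℝ) / h₀) * (y - g1₀) - ((1 - 0) / (1 - h₀)) * (y - g0₀))
        = ((g1 - g1₀) - (g0 - g0₀)) - ((y - g0) / (1 - h) - (y - g0₀) / (1 - h₀)) := by
      ring
    rw [key]
    have hdiv : |(y - g0) / (1 - h) - (y - g0₀) / (1 - h₀)|
        ≤ |(y - g0) - (y - g0₀)| / c + (2*M) * |(1 - h) - (1 - h₀)| / c ^ 2 := by
      apply div_sub_div_abs_bound _ _ _ _ _ _ hc hc1 hC1
      calc |y - g0₀| ≤ |y| + |g0₀| := abs_sub _ _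
        _ ≤ 2*M := by linarith
    have e1 : |(y - g0) - (y - g0₀)| = |g0 - g0₀| := by rw [abs_sub_comm]; ring_nf
    have e2 : |(1 - h) - (1 - h₀)| = |h - h₀| := by rw [abs_sub_comm]; ring_nf
    rw [e1, e2] at hdiv
    calc |((g1 - g1₀) - (g0 - g0₀)) - ((y - g0) / (1 - h) - (y - g0₀) / (1 - h₀))|
        ≤ |g1 - g1₀| + |g0 - g0₀| + |(y - g0) / (1 - h) - (y - g0₀) / (1 - h₀)| := by
          calc _ ≤ |(g1 - g1₀) - (g0 - g0₀)| + |(y - g0) / (1 - h) - (y - g0₀) / (1 - h₀)| :=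
                abs_sub _ _
            _ ≤ _ := by
                have := abs_sub (g1 - g1₀) (g0 - g0₀)
                linarith
      _ ≤ |g1 - g1₀| + |g0 - g0₀| + (|g0 - g0₀| / c + 2*M * |h - h₀| / c ^ 2) := by
          linarith
      _ ≤ (1 + 1/c + 2*M/c^2) * (|g1 - g1₀| + |g0 - g0₀| + |h - h₀|) := by
          have e : |g0 - g0₀| / c + 2*M * |h - h₀| / c ^ 2
              = |g0 - g0₀| * (1/c) + |h - h₀| * (2*M/c^2) := by ring
          rw [e]
          exact comb_bound _ _ _ _ _ hA hB hHH hicn hmc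
  · subst hw
    have key : (g1 - g0 + ((1:ℝ) / h) * (y - g1) - ((1 - 1) / (1 - h)) * (y - g0))
        - (g1₀ - g0₀ + ((1:ℝ) / h₀) * (y - g1₀) - ((1 - 1) / (1 - h₀)) * (y - g0₀))
        = ((g1 - g1₀) - (g0 - g0₀)) + ((y - g1) / h - (y - g1₀) / h₀) := by
      ring
    rw [key]
    have hdiv : |(y - g1) / h - (y - g1₀) / h₀|
        ≤ |(y - g1) - (y - g1₀)| / c + (2*M) * |h - h₀| / c ^ 2 := by
      apply div_sub_div_abs_bound _ _ _ _ _ _ hc hh1 hH1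
      calc |y - g1₀| ≤ |y| + |g1₀| := abs_sub _ _
        _ ≤ 2*M := by linarith
    have e1 : |(y - g1) - (y - g1₀)| = |g1 - g1₀| := by rw [abs_sub_comm]; ring_nf
    rw [e1] at hdiv
    calc |((g1 - g1₀) - (g0 - g0₀)) + ((y - g1) / h - (y - g1₀) / h₀)|
        ≤ |g1 - g1₀| + |g0 - g0₀| + |(y - g1) / h - (y - g1₀) / h₀| := by
          calc _ ≤ |(g1 - g1₀) - (g0 - g0₀)| + |(y - g1) / h - (y - g1₀) / h₀| := abs_add_le _ _
            _ ≤ _ := by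
                have := abs_sub (g1 - g1₀) (g0 - g0₀)
                linarith
      _ ≤ |g1 - g1₀| + |g0 - g0₀| + (|g1 - g1₀| / c + 2*M * |h - h₀| / c ^ 2) := by
          linarith
      _ ≤ (1 + 1/c + 2*M/c^2) * (|g1 - g1₀| + |g0 - g0₀| + |h - h₀|) := by
          have e : |g1 - g1₀| / c + 2*M * |h - h₀| / c ^ 2
              = |g1 - g1₀| * (1/c) + |h - h₀| * (2*M/c^2) := by ring
          rw [e]
          have := comb_bound |g0 - g0₀| |g1 - g1₀| |h - h₀| (1/c) (2*M/c^2) hB hA hHH hicn hmc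
          linarith

/-- Lipschitz-type stability of the AIPW score in the nuisance functions, with respect
to `L²` norms, with a constant depending only on `M` and `c`. -/
theorem aipw_score_stability (M c : ℝ) (hM : 0 < M) (hc : 0 < c) (hc2 : c < 1/2) :
    ∃ C : ℝ, 0 < C ∧
      ∀ {Ω : Type} [MeasurableSpace Ω] (μ : Measure Ω) [IsProbabilityMeasure μ]
        {E F : Type} [MeasurableSpace E] [MeasurableSpace F]
        (W : Ω → ℝ) (D : Ω → E) (U : Ω → F) (Y : Ω → ℝ)
        (g1 g0 g1₀ g0₀ : E → ℝ) (h h₀ : F → ℝ),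
        Measurable W → Measurable D → Measurable U → Measurable Y →
        Measurable g1 → Measurable g0 → Measurable h →
        Measurable g1₀ → Measurable g0₀ → Measurable h₀ →
        (∀ ω, W ω = 0 ∨ W ω = 1) →
        (∀ᵐ ω ∂μ, |Y ω| ≤ M ∧ |g1 (D ω)| ≤ M ∧ |g0 (D ω)| ≤ M ∧
          |g1₀ (D ω)| ≤ M ∧ |g0₀ (D ω)| ≤ M) →
        (∀ᵐ ω ∂μ, c ≤ h (U ω) ∧ h (U ω) ≤ 1 - c ∧ c ≤ h₀ (U ω) ∧ h₀ (U ω) ≤ 1 - c) →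
        eLpNorm (fun ω =>
            (g1 (D ω) - g0 (D ω)
              + (W ω / h (U ω)) * (Y ω - g1 (D ω))
              - ((1 - W ω) / (1 - h (U ω))) * (Y ω - g0 (D ω)))
            - (g1₀ (D ω) - g0₀ (D ω)
              + (W ω / h₀ (U ω)) * (Y ω - g1₀ (D ω))
              - ((1 - W ω) / (1 - h₀ (U ω))) * (Y ω - g0₀ (D ω)))) 2 μ
          ≤ ENNReal.ofReal C *
              (eLpNorm (fun ω => g1 (D ω) - g1₀ (D ω)) 2 μ
                + eLpNorm (fun ω => g0 (D ω) - g0₀ (D ω)) 2 μ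
                + eLpNorm (fun ω => h (U ω) - h₀ (U ω)) 2 μ) := by
  refine ⟨1 + 1/c + 2*M/c^2, by positivity, ?_⟩
  intro Ω _ μ _ E F _ _ W D U Y g1 g0 g1₀ g0₀ h h₀ hW hD hU hY hg1 hg0 hh hg1₀ hg0₀ hh₀
    hWval hbd hhbd
  set C : ℝ := 1 + 1/c + 2*M/c^2 with hCdef
  have hC0 : 0 ≤ C := by positivity
  set F1 : Ω → ℝ := fun ω => g1 (D ω) - g1₀ (D ω) with hF1
  set F0 : Ω → ℝ := fun ω => g0 (D ω) - g0₀ (D ω) with hF0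
  set Fh : Ω → ℝ := fun ω => h (U ω) - h₀ (U ω) with hFh
  have mF1 : Measurable F1 := (hg1.comp hD).sub (hg1₀.comp hD)
  have mF0 : Measurable F0 := (hg0.comp hD).sub (hg0₀.comp hD)
  have mFh : Measurable Fh := (hh.comp hU).sub (hh₀.comp hU)
  have step1 : eLpNorm (fun ω =>
        (g1 (D ω) - g0 (D ω)
          + (W ω / h (U ω)) * (Y ω - g1 (D ω))
          - ((1 - W ω) / (1 - h (U ω))) * (Y ω - g0 (D ω)))
        - (g1₀ (D ω) - g0₀ (D ω)
          + (W ω / h₀ (U ω)) * (Y ω - g1₀ (D ω))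
          - ((1 - W ω) / (1 - h₀ (U ω))) * (Y ω - g0₀ (D ω)))) 2 μ
      ≤ eLpNorm (fun ω => C * |F1 ω| + C * |F0 ω| + C * |Fh ω|) 2 μ := by
    apply eLpNorm_mono_ae
    filter_upwards [hbd, hhbd] with ω hb hhb
    obtain ⟨hyM, h1M, h0M, h1₀M, h0₀M⟩ := hb
    obtain ⟨hc1, hc2', hc3, hc4⟩ := hhb
    have key := aipw_pointwise M c (Y ω) (g1 (D ω)) (g0 (D ω)) (g1₀ (D ω)) (g0₀ (D ω))
      (h (U ω)) (h₀ (U ω)) (W ω) hM hc (hWval ω) hyM h1M h0M h1₀M h0₀M hc1 hc2' hc3 hc4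
    have hrhs : (0:ℝ) ≤ C * |F1 ω| + C * |F0 ω| + C * |Fh ω| := by positivity
    simp only [Real.norm_eq_abs, abs_of_nonneg hrhs]
    calc _ ≤ C * (|F1 ω| + |F0 ω| + |Fh ω|) := key
      _ = C * |F1 ω| + C * |F0 ω| + C * |Fh ω| := by ring
  have smul_eq : ∀ (G : Ω → ℝ), eLpNorm (fun ω => C * |G ω|) 2 μ
      = ENNReal.ofReal C * eLpNorm G 2 μ := by
    intro G
    have : (fun ω => C * |G ω|) = C • (fun ω => ‖G ω‖) := by
      funext ω; simp [Real.norm_eq_abs]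
    rw [this, eLpNorm_const_smul, eLpNorm_norm, Real.enorm_eq_ofReal hC0]
  have m1 : AEStronglyMeasurable (fun ω => C * |F1 ω|) μ :=
    ((measurable_const.mul mF1.abs)).aestronglyMeasurable
  have m0 : AEStronglyMeasurable (fun ω => C * |F0 ω|) μ :=
    ((measurable_const.mul mF0.abs)).aestronglyMeasurable
  have mh : AEStronglyMeasurable (fun ω => C * |Fh ω|) μ :=
    ((measurable_const.mul mFh.abs)).aestronglyMeasurable
  have step2 : eLpNorm (fun ω => C * |F1 ω| + C * |F0 ω| + C * |Fh ω|) 2 μ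
      ≤ eLpNorm (fun ω => C * |F1 ω|) 2 μ + eLpNorm (fun ω => C * |F0 ω|) 2 μ
        + eLpNorm (fun ω => C * |Fh ω|) 2 μ := by
    calc eLpNorm (fun ω => C * |F1 ω| + C * |F0 ω| + C * |Fh ω|) 2 μ
        ≤ eLpNorm (fun ω => C * |F1 ω| + C * |F0 ω|) 2 μ
          + eLpNorm (fun ω => C * |Fh ω|) 2 μ :=
          eLpNorm_add_le (m1.add m0) mh one_le_two
      _ ≤ _ := by
          gcongr
          exact eLpNorm_add_le m1 m0 one_le_two
  calc _ ≤ _ := step1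
    _ ≤ _ := step2
    _ = ENNReal.ofReal C *
        (eLpNorm F1 2 μ + eLpNorm F0 2 μ + eLpNorm Fh 2 μ) := by
        rw [smul_eq F1, smul_eq F0, smul_eq Fh, mul_add, mul_add]
    _ = _ := rfl
end
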